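/- arXiv:2103.03771 — 13 statements merged into one kernel-verified Lean document; each statement's English description precedes it below -/
import Mathlib

section
/- Let G be a DAG on [p]. For distinct nodes i, j, k: (1) i and j are adjacent in G if and only if c_G({i,j}) = 1; (2) i → j ← k is an induced v-structure in G if and only if c_G({i,j,k}) = 1 and c_G({i,k}) = 0. -/
open scoped Classical

/-- A directed acyclic graph on vertex set `Fin p`. -/
structure DAGraph (p : ℕ) where
  E : Fin p → Fin p → Prop
  acyclic : ∀ i, ¬ Relation.TransGen E i i

/-- The characteristic imset of a directed graph given by the relation `E`. -/
noncomputable def imsetRel {p : ℕ} (E : Fin p → Fin p → Prop) (S : Finset (Fin p)) : ℝ :=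
  if ∃ i ∈ S, ∀ j ∈ S, j ≠ i → E j i then 1 else 0

/-- The skeleton (underlying undirected graph) of a DAG. -/
def DAGraph.skeleton {p : ℕ} (G : DAGraph p) : SimpleGraph (Fin p) where
  Adj a b := G.E a b ∨ G.E b a
  symm := ⟨fun a b h => Or.symm h⟩
  loopless := ⟨fun a h =>
    h.elim (fun h' => G.acyclic a (Relation.TransGen.single h'))
      (fun h' => G.acyclic a (Relation.TransGen.single h'))⟩

/-- The characteristic imset of a DAG. -/
noncomputable def DAGraph.cim {p : ℕ} (G : DAGraph p) : Finset (Fin p) → ℝ := imsetRel G.E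

/-- `G.vStruct a b c` : `a → b ← c` is a v-structure (with `a`, `c` non-adjacent). -/
def DAGraph.vStruct {p : ℕ} (G : DAGraph p) (a b c : Fin p) : Prop :=
  a ≠ c ∧ G.E a b ∧ G.E c b ∧ ¬ G.skeleton.Adj a c

/-- The relation obtained from `E` by reversing the single edge `i → j`. -/
def reverseRel {p : ℕ} (E : Fin p → Fin p → Prop) (i j : Fin p) : Fin p → Fin p → Prop :=
  fun a b => (E a b ∧ ¬(a = i ∧ b = j)) ∨ (a = j ∧ b = i)

/-- For a DAG `G` on `[p]` and distinct nodes `i, j, k`: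
(1) `i` and `j` are adjacent iff `c_G({i,j}) = 1`;
(2) `i → j ← k` is an induced v-structure iff `c_G({i,j,k}) = 1` and `c_G({i,k}) = 0`. -/
theorem stmt2 {p : ℕ} (G : DAGraph p) (i j k : Fin p)
    (hij : i ≠ j) (hik : i ≠ k) (hjk : j ≠ k) :
    (G.skeleton.Adj i j ↔ G.cim {i, j} = 1) ∧
      (G.vStruct i j k ↔ (G.cim {i, j, k} = 1 ∧ G.cim {i, k} = 0)) := by
  have cim_eq_one : ∀ S : Finset (Fin p),
      G.cim S = 1 ↔ ∃ m ∈ S, ∀ n ∈ S, n ≠ m → G.E n m := by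
    intro S
    unfold DAGraph.cim imsetRel
    split <;> simp_all
  have cim_eq_zero : ∀ S : Finset (Fin p),
      G.cim S = 0 ↔ ¬ ∃ m ∈ S, ∀ n ∈ S, n ≠ m → G.E n m := by
    intro S
    unfold DAGraph.cim imsetRel
    split <;> simp_all
  constructor
  · rw [cim_eq_one]
    constructor
    · rintro (h | h)
      · exact ⟨j, by simp, fun n hn hnj => by
          rcases Finset.mem_insert.1 hn with rfl | hn
          · exact h
          · simp at hn; subst hn; exact absurd rfl hnj⟩
      · exact ⟨i, by simp, fun n hn hni => by
          rcases Finset.mem_insert.1 hn with rfl | hn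
          · exact absurd rfl hni
          · simp at hn; subst hn; exact h⟩
    · rintro ⟨m, hm, hall⟩
      rcases Finset.mem_insert.1 hm with rfl | hm
      · exact Or.inr (hall j (by simp) (Ne.symm hij))
      · simp at hm; subst hm; exact Or.inl (hall i (by simp) hij)
  · constructor
    · rintro ⟨hac, hij', hkj', hnadj⟩
      constructor
      · rw [cim_eq_one]
        exact ⟨j, by simp, fun n hn hnj => by
          simp only [Finset.mem_insert, Finset.mem_singleton] at hn
          rcases hn with rfl | rfl | rfl
          · exact hij'
          · exact absurd rfl hnj
          · exact hkj'⟩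
      · rw [cim_eq_zero]
        rintro ⟨m, hm, hall⟩
        simp only [Finset.mem_insert, Finset.mem_singleton] at hm
        rcases hm with rfl | rfl
        · exact hnadj (Or.inr (hall k (by simp) (Ne.symm hik)))
        · exact hnadj (Or.inl (hall i (by simp) hik))
    · rintro ⟨h1, h0⟩
      rw [cim_eq_one] at h1
      rw [cim_eq_zero] at h0
      have hnadj : ¬ G.skeleton.Adj i k := by
        rintro (h | h)
        · exact h0 ⟨k, by simp, fun n hn hnk => by
            simp only [Finset.mem_insert, Finset.mem_singleton] at hn
            rcases hn with rfl | rfl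
            · exact h
            · exact absurd rfl hnk⟩
        · exact h0 ⟨i, by simp, fun n hn hni => by
            simp only [Finset.mem_insert, Finset.mem_singleton] at hn
            rcases hn with rfl | rfl
            · exact absurd rfl hni
            · exact h⟩
      obtain ⟨m, hm, hall⟩ := h1
      simp only [Finset.mem_insert, Finset.mem_singleton] at hm
      rcases hm with rfl | rfl | rfl
      · exact absurd (Or.inr (hall k (by simp) (Ne.symm hik))) hnadj
      · exact ⟨hik, hall i (by simp) hij, hall k (by simp) (Ne.symm hjk), hnadj⟩
      · exact absurd (Or.inl (hall i (by simp) hik)) hnadj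
end

section
/- Let H = ([p], E) and H' = ([p], E') be undirected graphs with E ⊆ E'. Then the convex hull of the set of characteristic imsets c_G of DAGs G whose skeleton ([p], D) satisfies E ⊆ D ⊆ E' is a face of the characteristic imset polytope CIM_p. -/
open scoped Classical

/-- The set of characteristic imsets of all DAGs on `p` nodes. -/
noncomputable def cimVertices (p : ℕ) : Set (Finset (Fin p) → ℝ) :=
  {x | ∃ G : DAGraph p, x = G.cim}

/-- The characteristic imset polytope `CIM_p`. -/
noncomputable def cimPolytope (p : ℕ) : Set (Finset (Fin p) → ℝ) :=
  convexHull ℝ (cimVertices p)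

/-- Dot product of vectors indexed by subsets of `[p]`. -/
noncomputable def dotF {p : ℕ} (w x : Finset (Fin p) → ℝ) : ℝ :=
  ∑ S : Finset (Fin p), w S * x S

/-- `F` is a face of `P`: the set of maximizers of some linear functional over `P`. -/
def IsFaceOf {p : ℕ} (F P : Set (Finset (Fin p) → ℝ)) : Prop :=
  ∃ (w : Finset (Fin p) → ℝ) (a : ℝ), (∀ x ∈ P, dotF w x ≤ a) ∧ F = {x ∈ P | dotF w x = a}

/-- The segment between distinct `u` and `v` is an edge (one-dimensional face) of `P`. -/
def IsEdgeOf {p : ℕ} (u v : Finset (Fin p) → ℝ) (P : Set (Finset (Fin p) → ℝ)) : Prop :=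
  u ≠ v ∧ ∃ (w : Finset (Fin p) → ℝ) (a : ℝ), (∀ x ∈ P, dotF w x ≤ a) ∧
    {x ∈ P | dotF w x = a} = segment ℝ u v

section face_aux

variable {p : ℕ}

lemma imsetRel_nonneg (E : Fin p → Fin p → Prop) (S : Finset (Fin p)) :
    0 ≤ imsetRel E S := by
  unfold imsetRel; split <;> norm_num

lemma imsetRel_le_one (E : Fin p → Fin p → Prop) (S : Finset (Fin p)) :
    imsetRel E S ≤ 1 := by
  unfold imsetRel; split <;> norm_num

lemma imsetRel_pair (E : Fin p → Fin p → Prop) {i j : Fin p} (hij : i ≠ j) :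
    imsetRel E ({i, j} : Finset (Fin p)) = if E i j ∨ E j i then 1 else 0 := by
  unfold imsetRel
  refine if_congr ?_ rfl rfl
  constructor
  · rintro ⟨k, hk, h⟩
    simp only [Finset.mem_insert, Finset.mem_singleton] at hk
    rcases hk with rfl | rfl
    · exact Or.inr (h j (by simp) hij.symm)
    · exact Or.inl (h i (by simp) hij)
  · rintro (h | h)
    · refine ⟨j, by simp, fun l hl hne => ?_⟩
      simp only [Finset.mem_insert, Finset.mem_singleton] at hl
      rcases hl with rfl | rfl
      · exact h
      · exact absurd rfl hne
    · refine ⟨i, by simp, fun l hl hne => ?_⟩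
      simp only [Finset.mem_insert, Finset.mem_singleton] at hl
      rcases hl with rfl | rfl
      · exact absurd rfl hne
      · exact h

lemma cim_pair (G : DAGraph p) {i j : Fin p} (hij : i ≠ j) :
    G.cim ({i, j} : Finset (Fin p)) = if G.skeleton.Adj i j then 1 else 0 := by
  show imsetRel G.E ({i, j} : Finset (Fin p)) = _
  rw [imsetRel_pair G.E hij]
  exact if_congr Iff.rfl rfl rfl

lemma pair_adj_of_pair_eq {H : SimpleGraph (Fin p)} {i j i' j' : Fin p}
    (h : ({i', j'} : Finset (Fin p)) = {i, j}) (hadj : H.Adj i' j') : H.Adj i j := by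
  have hi' : i' = i ∨ i' = j := by
    have : i' ∈ ({i, j} : Finset (Fin p)) := h ▸ (by simp)
    simpa using this
  have hj' : j' = i ∨ j' = j := by
    have : j' ∈ ({i, j} : Finset (Fin p)) := h ▸ (by simp)
    simpa using this
  rcases hi' with rfl | rfl <;> rcases hj' with rfl | rfl
  · exact absurd hadj (H.loopless.irrefl _)
  · exact hadj
  · exact hadj.symm
  · exact absurd hadj (H.loopless.irrefl _)

/-- The weight vector for the face. -/
noncomputable def faceW (H H' : SimpleGraph (Fin p)) (S : Finset (Fin p)) : ℝ :=
  if ∃ i j : Fin p, S = {i, j} ∧ H.Adj i j then 1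
  else if ∃ i j : Fin p, i ≠ j ∧ S = {i, j} ∧ ¬ H'.Adj i j then -1
  else 0

/-- The bound for the face. -/
noncomputable def faceA (H : SimpleGraph (Fin p)) : ℝ :=
  ∑ S : Finset (Fin p), if ∃ i j : Fin p, S = {i, j} ∧ H.Adj i j then (1 : ℝ) else 0

lemma face_term_le (H H' : SimpleGraph (Fin p)) (G : DAGraph p) (S : Finset (Fin p)) :
    faceW H H' S * G.cim S ≤
      (if ∃ i j : Fin p, S = {i, j} ∧ H.Adj i j then (1 : ℝ) else 0) := by
  unfold faceW
  by_cases h1 : ∃ i j : Fin p, S = {i, j} ∧ H.Adj i j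
  · rw [if_pos h1, if_pos h1, one_mul]
    exact imsetRel_le_one G.E S
  · rw [if_neg h1, if_neg h1]
    by_cases h2 : ∃ i j : Fin p, i ≠ j ∧ S = {i, j} ∧ ¬ H'.Adj i j
    · rw [if_pos h2]
      have := imsetRel_nonneg G.E S
      show -1 * imsetRel G.E S ≤ 0
      nlinarith
    · rw [if_neg h2, zero_mul]

lemma face_vertex_le (H H' : SimpleGraph (Fin p)) (G : DAGraph p) :
    dotF (faceW H H') G.cim ≤ faceA H :=
  Finset.sum_le_sum fun S _ => face_term_le H H' G S

lemma face_vertex_eq_iff {H H' : SimpleGraph (Fin p)} (hle : H ≤ H') (G : DAGraph p) :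
    dotF (faceW H H') G.cim = faceA H ↔ H ≤ G.skeleton ∧ G.skeleton ≤ H' := by
  unfold dotF faceA
  rw [Finset.sum_eq_sum_iff_of_le (fun S _ => face_term_le H H' G S)]
  constructor
  · intro h
    constructor
    · intro i j hij
      have hne : i ≠ j := hij.ne
      have h1 : ∃ i' j' : Fin p, ({i, j} : Finset (Fin p)) = {i', j'} ∧ H.Adj i' j' :=
        ⟨i, j, rfl, hij⟩
      have ht := h ({i, j} : Finset (Fin p)) (Finset.mem_univ _)
      rw [faceW, if_pos h1, if_pos h1, one_mul] at ht
      rw [cim_pair G hne] at ht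
      by_contra hc
      rw [if_neg hc] at ht
      norm_num at ht
    · intro i j hadj
      by_contra hna
      have hne : i ≠ j := hadj.ne
      have h2 : ∃ i' j' : Fin p, i' ≠ j' ∧ ({i, j} : Finset (Fin p)) = {i', j'} ∧ ¬ H'.Adj i' j' :=
        ⟨i, j, hne, rfl, hna⟩
      have h1 : ¬ ∃ i' j' : Fin p, ({i, j} : Finset (Fin p)) = {i', j'} ∧ H.Adj i' j' := by
        rintro ⟨i', j', hS, hadj'⟩
        exact hna (pair_adj_of_pair_eq hS.symm (hle hadj'))
      have ht := h ({i, j} : Finset (Fin p)) (Finset.mem_univ _)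
      rw [faceW, if_neg h1, if_pos h2, if_neg h1] at ht
      have hc : G.cim ({i, j} : Finset (Fin p)) = 0 := by linarith
      rw [cim_pair G hne, if_pos hadj] at hc
      norm_num at hc
  · rintro ⟨hHle, hleH'⟩ S _
    unfold faceW
    by_cases h1 : ∃ i' j' : Fin p, S = {i', j'} ∧ H.Adj i' j'
    · rw [if_pos h1, if_pos h1, one_mul]
      obtain ⟨i, j, rfl, hadj⟩ := h1
      rw [cim_pair G hadj.ne, if_pos (hHle hadj)]
    · rw [if_neg h1, if_neg h1]
      by_cases h2 : ∃ i' j' : Fin p, i' ≠ j' ∧ S = {i', j'} ∧ ¬ H'.Adj i' j'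
      · rw [if_pos h2]
        obtain ⟨i, j, hij, rfl, hnadj⟩ := h2
        have hns : ¬ G.skeleton.Adj i j := fun hs => hnadj (hleH' hs)
        rw [cim_pair G hij, if_neg hns]
        ring
      · rw [if_neg h2, zero_mul]

lemma dotF_combo (w x y : Finset (Fin p) → ℝ) (c d : ℝ) :
    dotF w (c • x + d • y) = c * dotF w x + d * dotF w y := by
  unfold dotF
  rw [Finset.mul_sum, Finset.mul_sum, ← Finset.sum_add_distrib]
  refine Finset.sum_congr rfl fun S _ => ?_
  simp only [Pi.add_apply, Pi.smul_apply, smul_eq_mul]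
  ring

lemma dotF_sum {ι : Type} (w : Finset (Fin p) → ℝ) (t : Finset ι) (c : ι → ℝ)
    (z : ι → Finset (Fin p) → ℝ) :
    dotF w (∑ i ∈ t, c i • z i) = ∑ i ∈ t, c i * dotF w (z i) := by
  unfold dotF
  simp only [Finset.sum_apply, Pi.smul_apply, smul_eq_mul, Finset.mul_sum]
  rw [Finset.sum_comm]
  exact Finset.sum_congr rfl fun i _ => Finset.sum_congr rfl fun S _ => by ring

end face_aux

/-- For undirected graphs `H ≤ H'` on `[p]`, the convex hull of the
characteristic imsets of DAGs whose skeleton `D` satisfies `H ≤ D ≤ H'` is a face of `CIM_p`. -/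
theorem stmt3 {p : ℕ} (H H' : SimpleGraph (Fin p)) (hle : H ≤ H') :
    IsFaceOf
      (convexHull ℝ {x | ∃ G : DAGraph p, H ≤ G.skeleton ∧ G.skeleton ≤ H' ∧ x = G.cim})
      (cimPolytope p) := by
  classical
  refine ⟨faceW H H', faceA H, ?_, ?_⟩
  · intro x hx
    have hsub : cimPolytope p ⊆ {y | dotF (faceW H H') y ≤ faceA H} := by
      apply convexHull_min
      · rintro y ⟨G, rfl⟩
        exact face_vertex_le H H' G
      · intro u hu v hv c d hc hd hcd
        simp only [Set.mem_setOf_eq] at hu hv ⊢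
        rw [dotF_combo]
        calc c * dotF (faceW H H') u + d * dotF (faceW H H') v
            ≤ c * faceA H + d * faceA H :=
              add_le_add (mul_le_mul_of_nonneg_left hu hc) (mul_le_mul_of_nonneg_left hv hd)
          _ = faceA H := by rw [← add_mul, hcd, one_mul]
    exact hsub hx
  · apply Set.Subset.antisymm
    · apply convexHull_min
      · rintro y ⟨G, hG1, hG2, rfl⟩
        exact ⟨subset_convexHull ℝ _ ⟨G, rfl⟩, (face_vertex_eq_iff hle G).mpr ⟨hG1, hG2⟩⟩
      · have h1 : Convex ℝ (cimPolytope p) := convex_convexHull ℝ _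
        have h2 : Convex ℝ {y : Finset (Fin p) → ℝ | dotF (faceW H H') y = faceA H} := by
          intro u hu v hv c d hc hd hcd
          simp only [Set.mem_setOf_eq] at hu hv ⊢
          rw [dotF_combo, hu, hv, ← add_mul, hcd, one_mul]
        exact h1.inter h2
    · rintro x ⟨hxP, hxa⟩
      rw [cimPolytope, convexHull_eq] at hxP
      obtain ⟨ι, t, c, z, hc0, hc1, hz, hx⟩ := hxP
      have hzle : ∀ i ∈ t, dotF (faceW H H') (z i) ≤ faceA H := by
        intro i hi
        obtain ⟨G, hG⟩ := hz i hi
        rw [hG]; exact face_vertex_le H H' G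
      have hxsum : x = ∑ i ∈ t, c i • z i := by
        rw [← hx, Finset.centerMass_eq_of_sum_1 _ _ hc1]
      have hdot : ∑ i ∈ t, c i * dotF (faceW H H') (z i) = faceA H := by
        rw [← dotF_sum, ← hxsum, hxa]
      have hkey : ∀ i ∈ t, c i ≠ 0 → dotF (faceW H H') (z i) = faceA H := by
        have hz0 : ∑ i ∈ t, c i * (faceA H - dotF (faceW H H') (z i)) = 0 := by
          simp only [mul_sub]
          rw [Finset.sum_sub_distrib, hdot, ← Finset.sum_mul, hc1, one_mul, sub_self]
        intro i hi hci
        have hterm := (Finset.sum_eq_zero_iff_of_nonneg (fun j hj =>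
          mul_nonneg (hc0 j hj) (sub_nonneg.mpr (hzle j hj)))).mp hz0 i hi
        rcases mul_eq_zero.mp hterm with h | h
        · exact absurd h hci
        · linarith
      rw [← hx, ← Finset.centerMass_filter_ne_zero (w := c) z]
      apply Finset.centerMass_mem_convexHull
      · intro i hi; exact hc0 i (Finset.mem_filter.mp hi).1
      · rw [Finset.sum_filter_ne_zero, hc1]; norm_num
      · intro i hi
        obtain ⟨hi', hci⟩ := Finset.mem_filter.mp hi
        obtain ⟨G, hG⟩ := hz i hi'
        have heq := (face_vertex_eq_iff hle G).mp (by rw [← hG]; exact hkey i hi' hci)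
        exact ⟨G, heq.1, heq.2, hG⟩
end

section
/- Suppose G and H are DAGs on [p] with c_H = c_G + e_{S*} for some S* ⊆ [p] with |S*| ≥ 2 (an 'addition'). Then either |S*| = 2, say S* = {i,j}, every v-structure of H is a v-structure of G, and the skeletons of G and H differ exactly by the edge {i,j}; or |S*| = 3, say S* = {i,j,k}, G and H have the same skeleton, and H has exactly one v-structure not in G, namely one of the form i → k ← j on the set S*. In particular |S*| ≤ 3 always holds. -/
open scoped Classical

lemma imset_one_iff {p : ℕ} (E : Fin p → Fin p → Prop) (S : Finset (Fin p)) :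
    imsetRel E S = 1 ↔ ∃ i ∈ S, ∀ j ∈ S, j ≠ i → E j i := by
  unfold imsetRel; split_ifs with h <;> simp [h]

lemma cim_one_iff {p : ℕ} (G : DAGraph p) (S : Finset (Fin p)) :
    G.cim S = 1 ↔ ∃ i ∈ S, ∀ j ∈ S, j ≠ i → G.E j i := imset_one_iff G.E S

lemma cim_one_of_sink {p : ℕ} {G : DAGraph p} {S : Finset (Fin p)} {b : Fin p} (hb : b ∈ S)
    (h : ∀ j ∈ S, j ≠ b → G.E j b) : G.cim S = 1 := (cim_one_iff G S).mpr ⟨b, hb, h⟩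

lemma DAG_ne_of_E {p : ℕ} {G : DAGraph p} {a b : Fin p} (h : G.E a b) : a ≠ b := by
  rintro rfl; exact G.acyclic a (Relation.TransGen.single h)

lemma exists_top {p : ℕ} (G : DAGraph p) (s : Finset (Fin p)) (hs : s.Nonempty) :
    ∃ z ∈ s, ∀ y ∈ s, ¬ G.E z y := by
  haveI : IsIrrefl (Fin p) (fun a b : Fin p => Relation.TransGen G.E b a) :=
    ⟨fun a => G.acyclic a⟩
  haveI : IsTrans (Fin p) (fun a b : Fin p => Relation.TransGen G.E b a) :=
    ⟨fun a b c h1 h2 => h2.trans h1⟩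
  have hwf := Finite.wellFounded_of_trans_of_irrefl
    (fun a b : Fin p => Relation.TransGen G.E b a)
  obtain ⟨z, hz, hmin⟩ := hwf.has_min (↑s : Set (Fin p)) (by exact_mod_cast hs)
  exact ⟨z, by exact_mod_cast hz,
    fun y hy hE => hmin y (by exact_mod_cast hy) (Relation.TransGen.single hE)⟩

lemma cim_pair_iff {p : ℕ} (G : DAGraph p) {a b : Fin p} (hab : a ≠ b) :
    G.cim {a, b} = 1 ↔ G.skeleton.Adj a b := by
  rw [cim_one_iff]
  constructor
  · rintro ⟨i, hi, hpar⟩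
    rcases Finset.mem_insert.mp hi with rfl | hi
    · exact Or.inr (hpar b (by simp) hab.symm)
    · rw [Finset.mem_singleton] at hi; subst hi
      exact Or.inl (hpar a (by simp) hab)
  · rintro (h | h)
    · refine ⟨b, by simp, fun j hj hjb => ?_⟩
      rcases Finset.mem_insert.mp hj with rfl | hj
      · exact h
      · exact absurd (Finset.mem_singleton.mp hj) hjb
    · refine ⟨a, by simp, fun j hj hja => ?_⟩
      rcases Finset.mem_insert.mp hj with rfl | hj
      · exact absurd rfl hja
      · rw [Finset.mem_singleton.mp hj]; exact h

lemma triple_sink {p : ℕ} (G : DAGraph p) {a b c : Fin p} (hab : a ≠ b) (hac : a ≠ c)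
    (hbc : b ≠ c) (h1 : G.cim {a, b, c} = 1) (hnadj : ¬ G.skeleton.Adj a c) :
    G.E a b ∧ G.E c b := by
  rw [cim_one_iff] at h1
  obtain ⟨i, hi, hpar⟩ := h1
  have hmem : i = a ∨ i = b ∨ i = c := by simpa using hi
  rcases hmem with rfl | rfl | rfl
  · exact absurd (Or.inr (hpar c (by simp) hac.symm)) hnadj
  · exact ⟨hpar a (by simp) hab, hpar c (by simp) hbc.symm⟩
  · exact absurd (Or.inl (hpar a (by simp) hac)) hnadj

/-- Characterization of additions: if `c_H = c_G + e_{S*}` with `|S*| ≥ 2`,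
then either `|S*| = 2` (an edge addition) or `|S*| = 3` (a v-structure addition), with the
stated graphical descriptions. In particular `|S*| ≤ 3`. -/
theorem stmt5 {p : ℕ} (G H : DAGraph p) (Sstar : Finset (Fin p)) (hS : 2 ≤ Sstar.card)
    (hadd : ∀ T : Finset (Fin p), H.cim T = G.cim T + (if T = Sstar then 1 else 0)) :
    (Sstar.card = 2 ∧ ∃ i j : Fin p, i ≠ j ∧ Sstar = {i, j} ∧
        (∀ a b c, H.vStruct a b c → G.vStruct a b c) ∧
        ¬ G.skeleton.Adj i j ∧ H.skeleton.Adj i j ∧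
        (∀ a b : Fin p, a ≠ b → ({a, b} : Finset (Fin p)) ≠ Sstar →
          (G.skeleton.Adj a b ↔ H.skeleton.Adj a b)))
    ∨
    (Sstar.card = 3 ∧ G.skeleton = H.skeleton ∧ ∃ i j k : Fin p, Sstar = {i, j, k} ∧
        H.vStruct i k j ∧ ¬ G.vStruct i k j ∧
        (∀ a b c, G.vStruct a b c → H.vStruct a b c) ∧
        (∀ a b c, H.vStruct a b c →
          (G.vStruct a b c ∨ ({a, b, c} : Finset (Fin p)) = Sstar))) := by
  have hTne : ∀ T : Finset (Fin p), T ≠ Sstar → H.cim T = G.cim T := by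
    intro T hT
    have := hadd T
    simpa [hT] using this
  have hSs : H.cim Sstar = G.cim Sstar + 1 := by simpa using hadd Sstar
  simp only [DAGraph.cim, imsetRel] at hSs
  split_ifs at hSs with hH1 hG0
  · exact absurd hSs (by norm_num)
  · -- hH1 : H has a sink on Sstar; hG0 : G does not
    clear hSs
    have hH1' : H.cim Sstar = 1 := (cim_one_iff H Sstar).mpr hH1
    have hG0' : ¬ ∃ i ∈ Sstar, ∀ j ∈ Sstar, j ≠ i → G.E j i := hG0
    have hmax4 : Sstar.card ≤ 3 := by
      by_contra hc
      push_neg at hc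
      obtain ⟨m, hm, hmpar⟩ := hH1
      obtain ⟨z, hz, hzmax⟩ := exists_top G Sstar ⟨m, hm⟩
      apply hG0'
      refine ⟨z, hz, ?_⟩
      intro y hy hyz
      by_cases hym : y = m
      · subst hym
        have hzy : z ≠ y := hyz.symm
        have hHp : H.cim {z, y} = 1 := by
          refine cim_one_of_sink (b := y) (by simp) ?_
          intro j hj hjy
          rcases Finset.mem_insert.mp hj with rfl | hj
          · exact hmpar j hz hjy
          · exact absurd (Finset.mem_singleton.mp hj) hjy
        have hne : ({z, y} : Finset (Fin p)) ≠ Sstar := by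
          intro h
          have : Sstar.card ≤ 2 := by
            rw [← h]; exact (Finset.card_insert_le _ _).trans (by simp)
          omega
        have hGp : G.cim {z, y} = 1 := by rw [← hTne _ hne]; exact hHp
        rcases (cim_pair_iff G hzy).mp hGp with hE | hE
        · exact absurd hE (hzmax y hy)
        · exact hE
      · by_cases hzm : z = m
        · subst hzm
          have hHp : H.cim {y, z} = 1 := by
            refine cim_one_of_sink (b := z) (by simp) ?_
            intro j hj hjz
            rcases Finset.mem_insert.mp hj with rfl | hj
            · exact hmpar j hy hym
            · exact absurd (Finset.mem_singleton.mp hj) hjz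
          have hne : ({y, z} : Finset (Fin p)) ≠ Sstar := by
            intro h
            have : Sstar.card ≤ 2 := by
              rw [← h]; exact (Finset.card_insert_le _ _).trans (by simp)
            omega
          have hGp : G.cim {y, z} = 1 := by rw [← hTne _ hne]; exact hHp
          rcases (cim_pair_iff G hyz).mp hGp with hE | hE
          · exact hE
          · exact absurd hE (hzmax y hy)
        · -- y ≠ m, z ≠ m : use the triple {m, y, z}
          have hHt : H.cim {m, y, z} = 1 := by
            refine cim_one_of_sink (b := m) (by simp) ?_
            intro j hj hjm
            have : j = m ∨ j = y ∨ j = z := by simpa using hj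
            rcases this with rfl | rfl | rfl
            · exact absurd rfl hjm
            · exact hmpar j hy hym
            · exact hmpar j hz hzm
          have hne : ({m, y, z} : Finset (Fin p)) ≠ Sstar := by
            intro h
            have : Sstar.card ≤ 3 := by
              rw [← h]
              exact (Finset.card_insert_le _ _).trans
                (by simpa using Nat.add_le_add_right (Finset.card_insert_le y {z}) 1)
            omega
          have hGt : G.cim {m, y, z} = 1 := by rw [← hTne _ hne]; exact hHt
          obtain ⟨i, hi, hpar⟩ := (cim_one_iff G _).mp hGt
          have : i = m ∨ i = y ∨ i = z := by simpa using hi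
          rcases this with rfl | rfl | rfl
          · exact absurd (hpar z (by simp) (fun h => hzm h)) (hzmax i hm)
          · exact absurd (hpar z (by simp) (fun h => (hyz h.symm).elim)) (hzmax i hy)
          · exact hpar y (by simp) hyz
    have hadj_iff : ∀ a b : Fin p, a ≠ b → ({a, b} : Finset (Fin p)) ≠ Sstar →
        (G.skeleton.Adj a b ↔ H.skeleton.Adj a b) := by
      intro a b hab hne
      rw [← cim_pair_iff G hab, ← cim_pair_iff H hab, hTne _ hne]
    have h23 : Sstar.card = 2 ∨ Sstar.card = 3 := by omega
    rcases h23 with h2 | h3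
    · -- edge addition case
      obtain ⟨i, j, hij, rfl⟩ := Finset.card_eq_two.mp h2
      left
      refine ⟨h2, i, j, hij, rfl, ?_, ?_, ?_, hadj_iff⟩
      · rintro a b c ⟨hac, hab, hcb, hnadj⟩
        have hab' : a ≠ b := DAG_ne_of_E hab
        have hcb' : c ≠ b := DAG_ne_of_E hcb
        have hbc : b ≠ c := hcb'.symm
        have hHT : H.cim {a, b, c} = 1 := by
          refine cim_one_of_sink (b := b) (by simp) ?_
          intro t ht htb
          have : t = a ∨ t = b ∨ t = c := by simpa using ht
          rcases this with rfl | rfl | rfl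
          · exact hab
          · exact absurd rfl htb
          · exact hcb
        have hcard3 : ({a, b, c} : Finset (Fin p)).card = 3 :=
          Finset.card_eq_three.mpr ⟨a, b, c, hab', hac, hbc, rfl⟩
        have hTneS : ({a, b, c} : Finset (Fin p)) ≠ ({i, j} : Finset (Fin p)) := by
          intro h; rw [h, h2] at hcard3; omega
        have hGT : G.cim {a, b, c} = 1 := by rw [← hTne _ hTneS]; exact hHT
        have hnadjG : ¬ G.skeleton.Adj a c := by
          intro hadj
          apply hnadj
          by_cases hpe : ({a, c} : Finset (Fin p)) = ({i, j} : Finset (Fin p))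
          · have : H.cim {a, c} = 1 := by rw [hpe]; exact hH1'
            exact (cim_pair_iff H hac).mp this
          · exact (hadj_iff a c hac hpe).mp hadj
        obtain ⟨h1', h2'⟩ := triple_sink G hab' hac hbc hGT hnadjG
        exact ⟨hac, h1', h2', hnadjG⟩
      · intro hadj
        exact hG0' ((cim_one_iff G _).mp ((cim_pair_iff G hij).mpr hadj))
      · exact (cim_pair_iff H hij).mp hH1'
    · -- v-structure addition case
      right
      obtain ⟨s, hsmem, hspar⟩ := hH1
      have hcard2 : (Sstar.erase s).card = 2 := by
        rw [Finset.card_erase_of_mem hsmem, h3]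
      obtain ⟨x, y, hxy, hxyset⟩ := Finset.card_eq_two.mp hcard2
      have hxE : x ∈ Sstar.erase s := by rw [hxyset]; simp
      have hyE : y ∈ Sstar.erase s := by rw [hxyset]; simp
      have hx : x ∈ Sstar := Finset.mem_of_mem_erase hxE
      have hy : y ∈ Sstar := Finset.mem_of_mem_erase hyE
      have hxs : x ≠ s := Finset.ne_of_mem_erase hxE
      have hys : y ≠ s := Finset.ne_of_mem_erase hyE
      have hSet : Sstar = {x, y, s} := by
        have h1 : insert s (Sstar.erase s) = Sstar := Finset.insert_erase hsmem
        rw [← h1, hxyset]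
        ext t
        simp only [Finset.mem_insert, Finset.mem_singleton]
        tauto
      have hpairne : ∀ a b : Fin p, ({a, b} : Finset (Fin p)) ≠ Sstar := by
        intro a b h
        have : Sstar.card ≤ 2 := by
          rw [← h]; exact (Finset.card_insert_le _ _).trans (by simp)
        omega
      have hskel : G.skeleton = H.skeleton := by
        ext a b
        by_cases hab : a = b
        · subst hab
          exact iff_of_false (G.skeleton.loopless.irrefl a) (H.skeleton.loopless.irrefl a)
        · exact hadj_iff a b hab (hpairne a b)
      have hExs : H.E x s := hspar x hx hxs
      have hEys : H.E y s := hspar y hy hys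
      have hnadjG : ¬ G.skeleton.Adj x y := by
        intro hadj
        have hAxs : G.skeleton.Adj x s := by rw [hskel]; exact Or.inl hExs
        have hAys : G.skeleton.Adj y s := by rw [hskel]; exact Or.inl hEys
        obtain ⟨z, hzmem, hzmax⟩ := exists_top G ({x, y, s} : Finset (Fin p)) ⟨x, by simp⟩
        apply hG0'
        refine ⟨z, by rw [hSet]; exact hzmem, ?_⟩
        intro t ht htz
        rw [hSet] at ht
        have hadjall : G.skeleton.Adj t z := by
          have ht' : t = x ∨ t = y ∨ t = s := by simpa using ht
          have hz' : z = x ∨ z = y ∨ z = s := by simpa using hzmem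
          rcases ht' with rfl | rfl | rfl <;> rcases hz' with rfl | rfl | rfl <;>
            first
              | exact absurd rfl htz
              | exact hadj
              | exact hadj.symm
              | exact hAxs
              | exact hAxs.symm
              | exact hAys
              | exact hAys.symm
        have : G.E t z ∨ G.E z t := hadjall
        rcases this with hE | hE
        · exact hE
        · exact absurd hE (hzmax t ht)
      have hnadjH : ¬ H.skeleton.Adj x y := by rw [← hskel]; exact hnadjG
      refine ⟨h3, hskel, x, y, s, hSet, ⟨hxy, hExs, hEys, hnadjH⟩, ?_, ?_, ?_⟩
      · rintro ⟨-, hExs', hEys', -⟩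
        apply hG0'
        refine ⟨s, hsmem, ?_⟩
        intro t ht hts
        rw [hSet] at ht
        have : t = x ∨ t = y ∨ t = s := by simpa using ht
        rcases this with rfl | rfl | rfl
        · exact hExs'
        · exact hEys'
        · exact absurd rfl hts
      · rintro a b c ⟨hac, hEab, hEcb, hn⟩
        have hab' : a ≠ b := DAG_ne_of_E hEab
        have hbc : b ≠ c := (DAG_ne_of_E hEcb).symm
        have hGT : G.cim {a, b, c} = 1 := by
          refine cim_one_of_sink (b := b) (by simp) ?_
          intro t ht htb
          have : t = a ∨ t = b ∨ t = c := by simpa using ht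
          rcases this with rfl | rfl | rfl
          · exact hEab
          · exact absurd rfl htb
          · exact hEcb
        have hHT : H.cim {a, b, c} = 1 := by
          by_cases h : ({a, b, c} : Finset (Fin p)) = Sstar
          · rw [h]; exact hH1'
          · rw [hTne _ h]; exact hGT
        have hnH : ¬ H.skeleton.Adj a c := by rw [← hskel]; exact hn
        obtain ⟨h1', h2'⟩ := triple_sink H hab' hac hbc hHT hnH
        exact ⟨hac, h1', h2', hnH⟩
      · rintro a b c ⟨hac, hEab, hEcb, hn⟩
        by_cases h : ({a, b, c} : Finset (Fin p)) = Sstar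
        · exact Or.inr h
        · left
          have hab' : a ≠ b := DAG_ne_of_E hEab
          have hbc : b ≠ c := (DAG_ne_of_E hEcb).symm
          have hHT : H.cim {a, b, c} = 1 := by
            refine cim_one_of_sink (b := b) (by simp) ?_
            intro t ht htb
            have : t = a ∨ t = b ∨ t = c := by simpa using ht
            rcases this with rfl | rfl | rfl
            · exact hEab
            · exact absurd rfl htb
            · exact hEcb
          have hGT : G.cim {a, b, c} = 1 := by rw [← hTne _ h]; exact hHT
          have hnG : ¬ G.skeleton.Adj a c := by rw [hskel]; exact hn
          obtain ⟨h1', h2'⟩ := triple_sink G hab' hac hbc hGT hnG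
          exact ⟨hac, h1', h2', hnG⟩
  · exact absurd hSs (by norm_num)
  · exact absurd hSs (by norm_num)
end

section
/- Let G be a DAG containing the edge i → j and suppose G_{i←j} (the graph obtained from G by reversing this single edge) is also acyclic. If pa_G(i) = pa_G(j) \ {i}, then G and G_{i←j} have the same characteristic imset, i.e., they are Markov equivalent. -/
open scoped Classical

lemma aux_dom {p : ℕ} (G H : DAGraph p) (i j : Fin p) (hij : G.E i j)
    (hH : ∀ a b, H.E a b ↔ reverseRel G.E i j a b)
    (hpa : {k | G.E k i} = {k | G.E k j} \ {i})
    (S : Finset (Fin p)) (v : Fin p) (hv : v ∈ S)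
    (hdom : ∀ u ∈ S, u ≠ v → G.E u v) :
    ∃ w ∈ S, ∀ u ∈ S, u ≠ w → H.E u w := by
  have hne : i ≠ j := by
    intro h; exact G.acyclic i (Relation.TransGen.single (h ▸ hij))
  have hji : ¬ G.E j i := fun h =>
    G.acyclic i ((Relation.TransGen.single hij).tail h)
  by_cases hiS : i ∈ S
  · by_cases hjS : j ∈ S
    · by_cases hvj : v = j
      · subst hvj
        refine ⟨i, hiS, fun u hu hui => ?_⟩
        by_cases huv : u = v
        · subst huv
          exact (hH u i).2 (Or.inr ⟨rfl, rfl⟩)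
        · have h1 : G.E u v := hdom u hu huv
          have h2 : u ∈ {k | G.E k v} \ {i} := ⟨h1, hui⟩
          rw [← hpa] at h2
          exact (hH u i).2 (Or.inl ⟨h2, fun ⟨_, h4⟩ => hne h4⟩)
      · by_cases hvi : v = i
        · subst hvi
          exact absurd (hdom j hjS (fun h => hvj h.symm)) hji
        · refine ⟨v, hv, fun u hu huv => ?_⟩
          exact (hH u v).2 (Or.inl ⟨hdom u hu huv, fun ⟨_, h4⟩ => hvj h4⟩)
    · refine ⟨v, hv, fun u hu huv => ?_⟩
      refine (hH u v).2 (Or.inl ⟨hdom u hu huv, fun ⟨_, h4⟩ => hjS (h4 ▸ hv)⟩)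
  · refine ⟨v, hv, fun u hu huv => ?_⟩
    exact (hH u v).2 (Or.inl ⟨hdom u hu huv, fun ⟨h3, _⟩ => hiS (h3 ▸ hu)⟩)

/-- If `G` has the edge `i → j`, the reversal `G_{i←j}` is acyclic
(witnessed by the DAG `H`), and `pa_G(i) = pa_G(j) \ {i}`, then `G` and `G_{i←j}` have the
same characteristic imset, i.e., they are Markov equivalent. -/
theorem stmt6 {p : ℕ} (G H : DAGraph p) (i j : Fin p) (hij : G.E i j)
    (hH : ∀ a b, H.E a b ↔ reverseRel G.E i j a b)
    (hpa : {k | G.E k i} = {k | G.E k j} \ {i}) :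
    G.cim = H.cim := by
  have hne : i ≠ j := by
    intro h; exact G.acyclic i (Relation.TransGen.single (h ▸ hij))
  have hji : ¬ G.E j i := fun h =>
    G.acyclic i ((Relation.TransGen.single hij).tail h)
  have hHji : H.E j i := (hH j i).2 (Or.inr ⟨rfl, rfl⟩)
  have hH' : ∀ a b, G.E a b ↔ reverseRel H.E j i a b := by
    intro a b
    constructor
    · intro h
      by_cases hab : a = i ∧ b = j
      · exact Or.inr ⟨hab.1, hab.2⟩
      · exact Or.inl ⟨(hH a b).2 (Or.inl ⟨h, hab⟩), fun ⟨h1, h2⟩ => hji (h1 ▸ h2 ▸ h)⟩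
    · rintro (⟨hab, hn⟩ | ⟨rfl, rfl⟩)
      · rcases (hH a b).1 hab with ⟨h, _⟩ | ⟨h1, h2⟩
        · exact h
        · exact absurd ⟨h1, h2⟩ hn
      · exact hij
  have hpa' : {k | H.E k j} = {k | H.E k i} \ {j} := by
    ext k
    simp only [Set.mem_setOf_eq, Set.mem_diff, Set.mem_singleton_iff, hH k j, hH k i, reverseRel]
    constructor
    · rintro (⟨h, hn⟩ | ⟨_, hji'⟩)
      · have hki : k ≠ i := fun hk => hn ⟨hk, trivial⟩
        have hGki : G.E k i := by
          have hm : k ∈ {k | G.E k j} \ {i} := ⟨h, hki⟩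
          rw [← hpa] at hm; exact hm
        have hkj : k ≠ j := fun hk => hji (hk ▸ hGki)
        exact ⟨Or.inl ⟨hGki, fun ⟨_, h2⟩ => hne h2⟩, hkj⟩
      · exact absurd hji' hne.symm
    · rintro ⟨⟨h, _⟩ | ⟨rfl, _⟩, hkj⟩
      · have hm : k ∈ {k | G.E k j} \ {i} := by rw [← hpa]; exact h
        exact Or.inl ⟨hm.1, fun ⟨hk, _⟩ => hm.2 hk⟩
      · exact absurd rfl hkj
  funext S
  unfold DAGraph.cim imsetRel
  congr 1
  apply propext
  constructor
  · rintro ⟨v, hv, hd⟩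
    exact aux_dom G H i j hij hH hpa S v hv hd
  · rintro ⟨v, hv, hd⟩
    exact aux_dom H G j i hHji hH' hpa' S v hv hd
end

section
/- Let G be a DAG with edge i → j such that reversing it yields a DAG G_{i←j}. Then c_{G_{i←j}} = c_G + Σ_{S ∈ A⁺} e_S − Σ_{S ∈ A⁻} e_S, where A⁺ = {S ∪ {i,j} : S ⊆ pa_G(i)} \ {S ∪ {i,j} : S ⊆ pa_G(j)} and A⁻ = {S ∪ {i,j} : S ⊆ pa_G(j)} \ {S ∪ {i,j} : S ⊆ pa_G(i)}. -/
open scoped Classical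

/-- Reversing the edge `i → j` of a DAG `G` (to obtain a DAG `H`) changes
the characteristic imset by `+ ∑_{S ∈ A⁺} e_S − ∑_{S ∈ A⁻} e_S`, where
`A⁺ = {S ∪ {i,j} : S ⊆ pa_G(i)} \ {S ∪ {i,j} : S ⊆ pa_G(j)}` and
`A⁻ = {S ∪ {i,j} : S ⊆ pa_G(j)} \ {S ∪ {i,j} : S ⊆ pa_G(i)}`. -/
theorem stmt7 {p : ℕ} (G H : DAGraph p) (i j : Fin p) (hij : G.E i j)
    (hH : ∀ a b, H.E a b ↔ reverseRel G.E i j a b) :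
    ∀ T : Finset (Fin p),
      H.cim T = G.cim T
        + (if (∃ S : Finset (Fin p), (∀ k ∈ S, G.E k i) ∧ T = S ∪ {i, j}) ∧
              ¬ (∃ S : Finset (Fin p), (∀ k ∈ S, G.E k j) ∧ T = S ∪ {i, j}) then 1 else 0)
        - (if (∃ S : Finset (Fin p), (∀ k ∈ S, G.E k j) ∧ T = S ∪ {i, j}) ∧
              ¬ (∃ S : Finset (Fin p), (∀ k ∈ S, G.E k i) ∧ T = S ∪ {i, j}) then 1 else 0) := by
  intro T
  have hne : i ≠ j := by
    rintro rfl
    exact G.acyclic i (Relation.TransGen.single hij)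
  have hji : ¬ G.E j i := fun h =>
    G.acyclic i (Relation.TransGen.head hij (Relation.TransGen.single h))
  -- characterizations of the two "difference" conditions
  have hchar : ∀ v : Fin p,
      (∃ S : Finset (Fin p), (∀ k ∈ S, G.E k v) ∧ T = S ∪ {i, j}) ↔
      (i ∈ T ∧ j ∈ T ∧ ∀ m ∈ T, m ≠ i → m ≠ j → G.E m v) := by
    intro v
    constructor
    · rintro ⟨S, hS, rfl⟩
      refine ⟨by simp, by simp, ?_⟩
      intro m hm hmi hmj
      rcases Finset.mem_union.1 hm with h | h
      · exact hS m h
      · simp only [Finset.mem_insert, Finset.mem_singleton] at h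
        rcases h with rfl | rfl
        · exact absurd rfl hmi
        · exact absurd rfl hmj
    · rintro ⟨hiT, hjT, hpar⟩
      refine ⟨T \ {i, j}, ?_, ?_⟩
      · intro k hk
        simp only [Finset.mem_sdiff, Finset.mem_insert, Finset.mem_singleton] at hk
        exact hpar k hk.1 (fun h => hk.2 (Or.inl h)) (fun h => hk.2 (Or.inr h))
      · have hsub : ({i, j} : Finset (Fin p)) ⊆ T := by
          intro x hx
          simp only [Finset.mem_insert, Finset.mem_singleton] at hx
          rcases hx with rfl | rfl <;> assumption
        exact (Finset.sdiff_union_of_subset hsub).symm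
  set A : Prop := ∃ S : Finset (Fin p), (∀ k ∈ S, G.E k i) ∧ T = S ∪ {i, j} with hA_def
  set B : Prop := ∃ S : Finset (Fin p), (∀ k ∈ S, G.E k j) ∧ T = S ∪ {i, j} with hB_def
  set C0 : Prop := ∃ k ∈ T, k ≠ i ∧ k ≠ j ∧ ∀ m ∈ T, m ≠ k → G.E m k with hC0_def
  set D : Prop := i ∉ T ∧ j ∈ T ∧ ∀ m ∈ T, m ≠ j → G.E m j with hD_def
  set E' : Prop := j ∉ T ∧ i ∈ T ∧ ∀ m ∈ T, m ≠ i → G.E m i with hE_def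
  set PG : Prop := ∃ k ∈ T, ∀ m ∈ T, m ≠ k → G.E m k with hPG_def
  set PH : Prop := ∃ k ∈ T, ∀ m ∈ T, m ≠ k → H.E m k with hPH_def
  have hAchar := hchar i
  have hBchar := hchar j
  -- decomposition of PG
  have hG : PG ↔ C0 ∨ D ∨ E' ∨ B := by
    constructor
    · rintro ⟨k, hk, hpar⟩
      by_cases hki : k = i
      · subst hki
        have hjT : j ∉ T := fun hjT => hji (hpar j hjT hne.symm)
        exact Or.inr (Or.inr (Or.inl ⟨hjT, hk, hpar⟩))
      · by_cases hkj : k = j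
        · subst hkj
          by_cases hiT : i ∈ T
          · refine Or.inr (Or.inr (Or.inr (hBchar.2 ⟨hiT, hk, ?_⟩)))
            intro m hm hmi hmj
            exact hpar m hm hmj
          · exact Or.inr (Or.inl ⟨hiT, hk, hpar⟩)
        · exact Or.inl ⟨k, hk, hki, hkj, hpar⟩
    · rintro (⟨k, hk, _, _, hpar⟩ | ⟨_, hjT, hpar⟩ | ⟨_, hiT, hpar⟩ | hB)
      · exact ⟨k, hk, hpar⟩
      · exact ⟨j, hjT, hpar⟩
      · exact ⟨i, hiT, hpar⟩
      · obtain ⟨hiT, hjT, hpar⟩ := hBchar.1 hB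
        refine ⟨j, hjT, ?_⟩
        intro m hm hmj
        by_cases hmi : m = i
        · subst hmi; exact hij
        · exact hpar m hm hmi hmj
  -- decomposition of PH
  have hHE : ∀ a b, H.E a b ↔ ((G.E a b ∧ ¬(a = i ∧ b = j)) ∨ (a = j ∧ b = i)) := hH
  have hH' : PH ↔ C0 ∨ D ∨ E' ∨ A := by
    constructor
    · rintro ⟨k, hk, hpar⟩
      by_cases hki : k = i
      · rw [hki] at hk hpar
        by_cases hjT : j ∈ T
        · refine Or.inr (Or.inr (Or.inr (hAchar.2 ⟨hk, hjT, ?_⟩)))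
          intro m hm hmi hmj
          rcases (hHE m i).1 (hpar m hm hmi) with ⟨h, _⟩ | ⟨rfl, _⟩
          · exact h
          · exact absurd rfl hmj
        · refine Or.inr (Or.inr (Or.inl ⟨hjT, hk, ?_⟩))
          intro m hm hmi
          rcases (hHE m i).1 (hpar m hm hmi) with ⟨h, _⟩ | ⟨rfl, _⟩
          · exact h
          · exact absurd hm hjT
      · by_cases hkj : k = j
        · rw [hkj] at hk hpar
          have hiT : i ∉ T := by
            intro hiT
            rcases (hHE i j).1 (hpar i hiT hne) with ⟨_, h⟩ | ⟨h, _⟩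
            · exact h ⟨rfl, rfl⟩
            · exact hne h
          refine Or.inr (Or.inl ⟨hiT, hk, ?_⟩)
          intro m hm hmj
          rcases (hHE m j).1 (hpar m hm hmj) with ⟨h, _⟩ | ⟨_, h⟩
          · exact h
          · exact absurd h.symm hne
        · refine Or.inl ⟨k, hk, hki, hkj, ?_⟩
          intro m hm hmk
          rcases (hHE m k).1 (hpar m hm hmk) with ⟨h, _⟩ | ⟨_, h⟩
          · exact h
          · exact absurd h hki
    · rintro (⟨k, hk, hki, hkj, hpar⟩ | ⟨hiT, hjT, hpar⟩ | ⟨hjT, hiT, hpar⟩ | hA)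
      · refine ⟨k, hk, ?_⟩
        intro m hm hmk
        exact (hHE m k).2 (Or.inl ⟨hpar m hm hmk, fun h => hkj h.2⟩)
      · refine ⟨j, hjT, ?_⟩
        intro m hm hmj
        refine (hHE m j).2 (Or.inl ⟨hpar m hm hmj, ?_⟩)
        rintro ⟨rfl, -⟩
        exact hiT hm
      · refine ⟨i, hiT, ?_⟩
        intro m hm hmi
        by_cases hmj : m = j
        · exact (hHE m i).2 (Or.inr ⟨hmj, rfl⟩)
        · exact (hHE m i).2 (Or.inl ⟨hpar m hm hmi, fun h => hne h.2⟩)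
      · obtain ⟨hiT, hjT, hpar⟩ := hAchar.1 hA
        refine ⟨i, hiT, ?_⟩
        intro m hm hmi
        by_cases hmj : m = j
        · exact (hHE m i).2 (Or.inr ⟨hmj, rfl⟩)
        · exact (hHE m i).2 (Or.inl ⟨hpar m hm hmi hmj, fun h => hne h.2⟩)
  -- key case facts
  have hnC0ofA : A → ¬ C0 := by
    intro hA
    obtain ⟨hiT, hjT, hpar⟩ := hAchar.1 hA
    rintro ⟨k, hk, hki, hkj, hpark⟩
    exact G.acyclic i (Relation.TransGen.head (hpark i hiT (Ne.symm hki))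
      (Relation.TransGen.single (hpar k hk hki hkj)))
  have hnC0ofB : B → ¬ C0 := by
    intro hB
    obtain ⟨hiT, hjT, hpar⟩ := hBchar.1 hB
    rintro ⟨k, hk, hki, hkj, hpark⟩
    exact G.acyclic j (Relation.TransGen.head (hpark j hjT (Ne.symm hkj))
      (Relation.TransGen.single (hpar k hk hki hkj)))
  have hiTofA : A → i ∈ T ∧ j ∈ T := fun hA => ⟨(hAchar.1 hA).1, (hAchar.1 hA).2.1⟩
  have hiTofB : B → i ∈ T ∧ j ∈ T := fun hB => ⟨(hBchar.1 hB).1, (hBchar.1 hB).2.1⟩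
  -- now compute
  show (if PH then (1:ℝ) else 0) = (if PG then (1:ℝ) else 0)
      + (if A ∧ ¬ B then (1:ℝ) else 0) - (if B ∧ ¬ A then (1:ℝ) else 0)
  by_cases hA : A <;> by_cases hB : B
  · have : PH ↔ PG := by
      rw [hG, hH']
      constructor
      · rintro (h | h | h | _) <;> [exact Or.inl h; exact Or.inr (Or.inl h);
          exact Or.inr (Or.inr (Or.inl h)); exact Or.inr (Or.inr (Or.inr hB))]
      · rintro (h | h | h | _) <;> [exact Or.inl h; exact Or.inr (Or.inl h);
          exact Or.inr (Or.inr (Or.inl h)); exact Or.inr (Or.inr (Or.inr hA))]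
    simp [this, hA, hB]
  · have hPHt : PH := hH'.2 (Or.inr (Or.inr (Or.inr hA)))
    have hPGf : ¬ PG := by
      rw [hG]
      rintro (h | h | h | h)
      · exact hnC0ofA hA h
      · exact h.1 (hiTofA hA).1
      · exact h.1 (hiTofA hA).2
      · exact hB h
    simp [hPHt, hPGf, hA, hB]
  · have hPGt : PG := hG.2 (Or.inr (Or.inr (Or.inr hB)))
    have hPHf : ¬ PH := by
      rw [hH']
      rintro (h | h | h | h)
      · exact hnC0ofB hB h
      · exact h.1 (hiTofB hB).1
      · exact h.1 (hiTofB hB).2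
      · exact hA h
    simp [hPGt, hPHf, hA, hB]
  · have : PH ↔ PG := by
      rw [hG, hH']
      constructor
      · rintro (h | h | h | h) <;> [exact Or.inl h; exact Or.inr (Or.inl h);
          exact Or.inr (Or.inr (Or.inl h)); exact absurd h hA]
      · rintro (h | h | h | h) <;> [exact Or.inl h; exact Or.inr (Or.inl h);
          exact Or.inr (Or.inr (Or.inl h)); exact absurd h hB]
    simp [this, hA, hB]
end

section
/- Let G be a DAG on [p] and let i, j be non-adjacent vertices of G such that adding the edge j → i yields a DAG G_{+j→i}. Then c_{G_{+j→i}} = c_G + Σ_{S ⊆ pa_G(i)} e_{S ∪ {i,j}}; in particular {G, G_{+j→i}} is an edge pair with respect to (i, j, pa_G(i)). -/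
open scoped Classical

/-- `{G, H}` is an *edge pair* with respect to `(i, j, S*)`. -/
noncomputable def EdgePair {p : ℕ} (G H : DAGraph p) (i j : Fin p)
    (Sstar : Finset (Fin p)) : Prop :=
  G.cim {i, j} = 0 ∧
  (∀ S ⊆ Sstar, S.Nonempty → G.cim (insert i S) = 1) ∧
  ∀ T : Finset (Fin p),
    H.cim T = G.cim T + (if ∃ S ⊆ Sstar, T = S ∪ {i, j} then 1 else 0)

/-- For non-adjacent `i, j` in a DAG `G`, if adding the edge `j → i`
yields a DAG `H = G_{+j→i}`, then `c_H = c_G + ∑_{S ⊆ pa_G(i)} e_{S ∪ {i,j}}`; in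
particular `{G, H}` is an edge pair with respect to `(i, j, pa_G(i))`. -/
theorem stmt8 {p : ℕ} (G H : DAGraph p) (i j : Fin p) (hij : i ≠ j)
    (hnadj : ¬ G.skeleton.Adj i j)
    (hH : ∀ a b, H.E a b ↔ (G.E a b ∨ (a = j ∧ b = i))) :
    (∀ T : Finset (Fin p),
        H.cim T = G.cim T +
          (if ∃ S : Finset (Fin p), (∀ k ∈ S, G.E k i) ∧ T = S ∪ {i, j} then 1 else 0)) ∧
      EdgePair G H i j (Finset.univ.filter fun k => G.E k i) := by

  have hGij : ¬ G.E i j := fun h => hnadj (Or.inl h)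
  have hGji : ¬ G.E j i := fun h => hnadj (Or.inr h)
  have no2 : ∀ a b : Fin p, G.E a b → G.E b a → False := fun a b h1 h2 =>
    G.acyclic a (Relation.TransGen.head h1 (Relation.TransGen.single h2))
  have main : ∀ T : Finset (Fin p),
      H.cim T = G.cim T +
        (if ∃ S : Finset (Fin p), (∀ k ∈ S, G.E k i) ∧ T = S ∪ {i, j} then 1 else 0) := by
    intro T
    by_cases hP : ∃ S : Finset (Fin p), (∀ k ∈ S, G.E k i) ∧ T = S ∪ {i, j}
    · obtain ⟨S, hS, rfl⟩ := hP
      have hiT : i ∈ S ∪ ({i, j} : Finset (Fin p)) := by simp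
      have hjT : j ∈ S ∪ ({i, j} : Finset (Fin p)) := by simp
      have hH1 : H.cim (S ∪ {i, j}) = 1 := by
        unfold DAGraph.cim imsetRel
        rw [if_pos]
        refine ⟨i, hiT, fun k hk hki => ?_⟩
        rcases Finset.mem_union.1 hk with h | h
        · exact (hH k i).2 (Or.inl (hS k h))
        · simp only [Finset.mem_insert, Finset.mem_singleton] at h
          rcases h with rfl | rfl
          · exact absurd rfl hki
          · exact (hH k i).2 (Or.inr ⟨rfl, rfl⟩)
      have hG0 : G.cim (S ∪ {i, j}) = 0 := by
        unfold DAGraph.cim imsetRel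
        rw [if_neg]
        rintro ⟨x, hx, hxw⟩
        by_cases hxi : x = i
        · subst hxi
          exact hGji (hxw j hjT (Ne.symm hij))
        · have hEix : G.E i x := hxw i hiT (fun h => hxi h.symm)
          by_cases hxj : x = j
          · subst hxj; exact hGij hEix
          · have hxS : x ∈ S := by
              rcases Finset.mem_union.1 hx with h | h
              · exact h
              · simp only [Finset.mem_insert, Finset.mem_singleton] at h; tauto
            exact no2 i x hEix (hS x hxS)
      rw [hH1, hG0, if_pos ⟨S, hS, rfl⟩]; ring
    · rw [if_neg hP, add_zero]
      have hiff : (∃ x ∈ T, ∀ k ∈ T, k ≠ x → H.E k x) ↔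
          (∃ x ∈ T, ∀ k ∈ T, k ≠ x → G.E k x) := by
        constructor
        · rintro ⟨x, hx, hw⟩
          by_cases hall : ∀ k ∈ T, k ≠ x → G.E k x
          · exact ⟨x, hx, hall⟩
          · exfalso
            push_neg at hall
            obtain ⟨k, hk, hkx, hnE⟩ := hall
            rcases (hH k x).1 (hw k hk hkx) with h | ⟨h1, h2⟩
            · exact hnE h
            · rw [h2] at hw hx
              rw [h1] at hk
              apply hP
              refine ⟨T \ {i, j}, fun m hm => ?_, ?_⟩
              · have hm' := Finset.mem_sdiff.1 hm
                have hmij : m ≠ i ∧ m ≠ j := by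
                  have := hm'.2
                  simp only [Finset.mem_insert, Finset.mem_singleton] at this
                  tauto
                rcases (hH m i).1 (hw m hm'.1 hmij.1) with h | ⟨h1, _⟩
                · exact h
                · exact absurd h1 hmij.2
              · have hsub : ({i, j} : Finset (Fin p)) ⊆ T := by
                  intro m hm
                  simp only [Finset.mem_insert, Finset.mem_singleton] at hm
                  rcases hm with rfl | rfl
                  · exact hx
                  · exact hk
                rw [Finset.sdiff_union_self_eq_union,
                  Finset.union_eq_left.2 hsub]
        · rintro ⟨x, hx, hw⟩
          exact ⟨x, hx, fun k hk hkx => (hH k x).2 (Or.inl (hw k hk hkx))⟩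
      unfold DAGraph.cim imsetRel
      exact if_congr hiff rfl rfl
  refine ⟨main, ?_, ?_, ?_⟩
  · unfold DAGraph.cim imsetRel
    rw [if_neg]
    rintro ⟨x, hx, hw⟩
    simp only [Finset.mem_insert, Finset.mem_singleton] at hx
    rcases hx with rfl | rfl
    · exact hGji (hw j (by simp) (Ne.symm hij))
    · exact hGij (hw i (by simp) hij)
  · intro S hS _
    unfold DAGraph.cim imsetRel
    rw [if_pos]
    refine ⟨i, Finset.mem_insert_self i S, fun k hk hki => ?_⟩
    rcases Finset.mem_insert.1 hk with rfl | hkS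
    · exact absurd rfl hki
    · exact (Finset.mem_filter.1 (hS hkS)).2
  · intro T
    rw [main T]
    congr 1
    apply if_congr _ rfl rfl
    constructor
    · rintro ⟨S, hS, rfl⟩
      exact ⟨S, fun k hk => Finset.mem_filter.2 ⟨Finset.mem_univ k, hS k hk⟩, rfl⟩
    · rintro ⟨S, hS, rfl⟩
      exact ⟨S, fun k hk => (Finset.mem_filter.1 (hS hk)).2, rfl⟩
end

section
/- If {G, H} is an addition, i.e., c_H = c_G + e_{S*} for some S* ⊆ [p] with |S*| ≥ 2, then the segment conv(c_G, c_H) is an edge (one-dimensional face) of CIM_p. -/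
open scoped Classical

lemma cim_mem01 {p : ℕ} (G : DAGraph p) (S : Finset (Fin p)) :
    G.cim S = 0 ∨ G.cim S = 1 := by
  unfold DAGraph.cim imsetRel
  split <;> simp

/-- If `{G, H}` is an addition, i.e. `c_H = c_G + e_{S*}` with `|S*| ≥ 2`,
then `conv(c_G, c_H)` is an edge of `CIM_p`. -/
theorem stmt9 {p : ℕ} (G H : DAGraph p) (Sstar : Finset (Fin p)) (hS : 2 ≤ Sstar.card)
    (hadd : ∀ T : Finset (Fin p), H.cim T = G.cim T + (if T = Sstar then 1 else 0)) :
    IsEdgeOf G.cim H.cim (cimPolytope p) := by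
  -- values at Sstar
  have hGS : G.cim Sstar = 0 := by
    rcases cim_mem01 G Sstar with h | h
    · exact h
    · exfalso
      have := hadd Sstar
      rw [if_pos rfl, h] at this
      rcases cim_mem01 H Sstar with h2 | h2 <;> rw [h2] at this <;> linarith
  have hHS : H.cim Sstar = 1 := by
    have := hadd Sstar; rw [if_pos rfl, hGS] at this; linarith
  have hagree : ∀ T, T ≠ Sstar → H.cim T = G.cim T := by
    intro T hT; have := hadd T; rw [if_neg hT] at this; linarith
  have hne : G.cim ≠ H.cim := by
    intro h
    rw [h, hHS] at hGS; norm_num at hGS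
  -- the functional
  set w : Finset (Fin p) → ℝ := fun T => if T = Sstar then 0 else 2 * G.cim T - 1 with hw
  set a : ℝ := dotF w G.cim with ha
  -- termwise bound for 0/1 vectors
  have hterm : ∀ (K : DAGraph p) (S : Finset (Fin p)),
      w S * K.cim S ≤ w S * G.cim S := by
    intro K S
    by_cases hSs : S = Sstar
    · simp [hw, hSs]
    · rcases cim_mem01 G S with h | h <;> rcases cim_mem01 K S with h2 | h2 <;>
        simp [hw, hSs, h, h2] <;> norm_num
  have hvert : ∀ K : DAGraph p, dotF w K.cim ≤ a := by
    intro K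
    exact Finset.sum_le_sum fun S _ => hterm K S
  -- equality case for vertices
  have hvert_eq : ∀ K : DAGraph p, dotF w K.cim = a → K.cim = G.cim ∨ K.cim = H.cim := by
    intro K hK
    have heach : ∀ S : Finset (Fin p), S ≠ Sstar → K.cim S = G.cim S := by
      have := (Finset.sum_eq_sum_iff_of_le (fun S _ => hterm K S)).1
        (show (∑ S : Finset (Fin p), w S * K.cim S) = ∑ S : Finset (Fin p), w S * G.cim S
          from hK)
      intro S hSs
      have h2 := this S (Finset.mem_univ S)
      rcases cim_mem01 G S with h | h <;> rcases cim_mem01 K S with h3 | h3 <;>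
        simp [hw, hSs, h, h3] at h2 ⊢ <;> linarith
    rcases cim_mem01 K Sstar with h | h
    · left; funext S
      by_cases hSs : S = Sstar
      · rw [hSs, h, hGS]
      · exact heach S hSs
    · right; funext S
      by_cases hSs : S = Sstar
      · rw [hSs, h, hHS]
      · rw [heach S hSs, hagree S hSs]
  -- linearity of dotF
  have hlin : ∀ (t s : ℝ) (x y : Finset (Fin p) → ℝ),
      dotF w (t • x + s • y) = t * dotF w x + s * dotF w y := by
    intro t s x y
    unfold dotF
    rw [Finset.mul_sum, Finset.mul_sum, ← Finset.sum_add_distrib]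
    apply Finset.sum_congr rfl
    intro S _
    simp [Pi.add_apply, Pi.smul_apply, smul_eq_mul]; ring
  have hbound : ∀ x ∈ cimPolytope p, dotF w x ≤ a := by
    intro x hx
    rw [cimPolytope, convexHull_eq] at hx
    obtain ⟨ι, t, f, z, hf0, hf1, hz, hcm⟩ := hx
    rw [Finset.centerMass_eq_of_sum_1 _ _ hf1] at hcm
    have : dotF w x = ∑ i ∈ t, f i * dotF w (z i) := by
      rw [← hcm]
      unfold dotF
      simp only [Finset.sum_apply, Pi.smul_apply, smul_eq_mul, Finset.mul_sum]
      rw [Finset.sum_comm]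
      exact Finset.sum_congr rfl fun i _ => Finset.sum_congr rfl fun S _ => by ring
    rw [this]
    calc ∑ i ∈ t, f i * dotF w (z i) ≤ ∑ i ∈ t, f i * a := by
          apply Finset.sum_le_sum
          intro i hi
          obtain ⟨K, hK⟩ := hz i hi
          exact mul_le_mul_of_nonneg_left (hK ▸ hvert K) (hf0 i hi)
      _ = a := by rw [← Finset.sum_mul, hf1, one_mul]
  have haH : dotF w H.cim = a := by
    rw [ha]
    unfold dotF
    apply Finset.sum_congr rfl
    intro S _
    by_cases hSs : S = Sstar
    · simp [hw, hSs]
    · rw [hagree S hSs]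
  refine ⟨hne, w, a, hbound, ?_⟩
  apply Set.Subset.antisymm
  · rintro x ⟨hxP, hxa⟩
    rw [cimPolytope, convexHull_eq] at hxP
    obtain ⟨ι, t, f, z, hf0, hf1, hz, hcm⟩ := hxP
    rw [Finset.centerMass_eq_of_sum_1 _ _ hf1] at hcm
    have hsum : dotF w x = ∑ i ∈ t, f i * dotF w (z i) := by
      rw [← hcm]; unfold dotF
      simp only [Finset.sum_apply, Pi.smul_apply, smul_eq_mul, Finset.mul_sum]
      rw [Finset.sum_comm]
      exact Finset.sum_congr rfl fun i _ => Finset.sum_congr rfl fun S _ => by ring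
    have hle : ∀ i ∈ t, f i * dotF w (z i) ≤ f i * a := by
      intro i hi
      obtain ⟨K, hK⟩ := hz i hi
      exact mul_le_mul_of_nonneg_left (hK ▸ hvert K) (hf0 i hi)
    have heq : ∀ i ∈ t, f i * dotF w (z i) = f i * a := by
      apply (Finset.sum_eq_sum_iff_of_le hle).1
      rw [← hsum, hxa, ← Finset.sum_mul, hf1, one_mul]
    -- each z i with f i > 0 is G.cim or H.cim
    have hzmem : ∀ i ∈ t, f i ≠ 0 → z i ∈ ({G.cim, H.cim} : Set (Finset (Fin p) → ℝ)) := by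
      intro i hi hfi
      obtain ⟨K, hK⟩ := hz i hi
      have : dotF w (z i) = a := by
        have := heq i hi
        exact mul_left_cancel₀ hfi this
      rcases hvert_eq K (hK ▸ this) with h | h
      · exact Or.inl (hK.trans h)
      · exact Or.inr (hK.trans h)
    rw [← convexHull_pair]
    have : x = t.centerMass f (fun i => if f i = 0 then G.cim else z i) := by
      rw [Finset.centerMass_eq_of_sum_1 _ _ hf1, ← hcm]
      apply Finset.sum_congr rfl
      intro i _
      by_cases h : f i = 0
      · simp [h]
      · simp [h]
    rw [this]
    apply Finset.centerMass_mem_convexHull _ hf0 (by rw [hf1]; norm_num)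
    intro i hi
    by_cases h : f i = 0
    · simp only [h, if_pos]; left; rfl
    · simp only [h, if_neg, ite_false]
      exact hzmem i hi h
  · intro x hx
    obtain ⟨s, r, hs, hr, hsr, rfl⟩ := hx
    constructor
    · have hGmem : G.cim ∈ cimPolytope p := subset_convexHull ℝ _ ⟨G, rfl⟩
      have hHmem : H.cim ∈ cimPolytope p := subset_convexHull ℝ _ ⟨H, rfl⟩
      exact (convex_convexHull ℝ _) hGmem hHmem hs hr hsr
    · rw [hlin, haH, ← ha]
      linear_combination a * hsr
end

section
/- For the path graph I_p on p ≥ 2 vertices with edges {i, i+1}, the characteristic imset polytope CIM_{I_p} is affinely equivalent to the stable set polytope STAB(I_{p−2}) of the path on p−2 vertices, via the projection sending the coordinate indexed by {i−1, i, i+1} to coordinate i−1. -/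
open scoped Classical

namespace Stmt10Aux

def va {p : ℕ} (k : Fin (p - 2)) : Fin p := ⟨k.1, by have := k.2; omega⟩
def vb {p : ℕ} (k : Fin (p - 2)) : Fin p := ⟨k.1 + 1, by have := k.2; omega⟩
def vc {p : ℕ} (k : Fin (p - 2)) : Fin p := ⟨k.1 + 2, by have := k.2; omega⟩

def tri {p : ℕ} (k : Fin (p - 2)) : Finset (Fin p) := {va k, vb k, vc k}

lemma mem_tri {p : ℕ} {k : Fin (p - 2)} {x : Fin p} :
    x ∈ tri k ↔ x.1 = k.1 ∨ x.1 = k.1 + 1 ∨ x.1 = k.1 + 2 := by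
  simp [tri, va, vb, vc, Fin.ext_iff]

variable {p : ℕ}

lemma E_adj (D : DAGraph p) (h : D.skeleton = SimpleGraph.pathGraph p) {a b : Fin p}
    (hE : D.E a b) : a.1 + 1 = b.1 ∨ b.1 + 1 = a.1 := by
  have hadj : D.skeleton.Adj a b := Or.inl hE
  rw [h, SimpleGraph.pathGraph_adj] at hadj
  exact hadj

lemma adj_E (D : DAGraph p) (h : D.skeleton = SimpleGraph.pathGraph p) {a b : Fin p}
    (hab : a.1 + 1 = b.1 ∨ b.1 + 1 = a.1) : D.E a b ∨ D.E b a := by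
  have hadj : (SimpleGraph.pathGraph p).Adj a b := SimpleGraph.pathGraph_adj.mpr hab
  rw [← h] at hadj
  exact hadj

lemma not_both (D : DAGraph p) {a b : Fin p} (h1 : D.E a b) (h2 : D.E b a) : False :=
  D.acyclic a (Relation.TransGen.head h1 (Relation.TransGen.single h2))

/-- classification of sink conditions off the triple coordinates -/
lemma sink_off (D : DAGraph p) (h : D.skeleton = SimpleGraph.pathGraph p)
    (S : Finset (Fin p)) (hS : ∀ k : Fin (p - 2), S ≠ tri k) :
    (∃ i ∈ S, ∀ j ∈ S, j ≠ i → D.E j i) ↔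
      (S.card = 1 ∨ ∃ a b : Fin p, a.1 + 1 = b.1 ∧ S = {a, b}) := by
  constructor
  · rintro ⟨i, hi, hsink⟩
    by_cases h1 : S = {i}
    · left; rw [h1]; exact Finset.card_singleton i
    have hj0 : ∃ j ∈ S, j ≠ i := by
      by_contra hc
      push_neg at hc
      exact h1 (Finset.ext fun x => ⟨fun hx => Finset.mem_singleton.mpr (hc x hx),
        fun hx => (Finset.mem_singleton.mp hx) ▸ hi⟩)
    obtain ⟨j, hj, hji⟩ := hj0
    by_cases h2 : S = {i, j}
    · right
      rcases E_adj D h (hsink j hj hji) with hd | hd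
      · exact ⟨j, i, hd, by rw [h2]; exact Finset.pair_comm i j⟩
      · exact ⟨i, j, hd, h2⟩
    have hl0 : ∃ l ∈ S, l ≠ i ∧ l ≠ j := by
      by_contra hc
      push_neg at hc
      apply h2
      ext x
      simp only [Finset.mem_insert, Finset.mem_singleton]
      constructor
      · intro hx
        rcases eq_or_ne x i with rfl | hxi
        · exact Or.inl rfl
        · exact Or.inr (hc x hx hxi)
      · rintro (rfl | rfl)
        exacts [hi, hj]
    obtain ⟨l, hl, hli, hlj⟩ := hl0
    have hdj := E_adj D h (hsink j hj hji)
    have hdl := E_adj D h (hsink l hl hli)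
    have hne : j.1 ≠ l.1 := fun hv => hlj (Fin.ext hv.symm)
    have hj2 := j.2
    have hl2 := l.2
    have hi1 : 1 ≤ i.1 ∧ i.1 + 1 < p := by omega
    have hk : i.1 - 1 < p - 2 := by omega
    exfalso
    apply hS ⟨i.1 - 1, hk⟩
    ext x
    rw [mem_tri]
    simp only [Fin.val_mk]
    constructor
    · intro hx
      rcases eq_or_ne x i with rfl | hxi
      · omega
      · have := E_adj D h (hsink x hx hxi)
        omega
    · intro hx
      have hx' : x = i ∨ x = j ∨ x = l := by
        rcases hx with h0 | h0 | h0 <;> rcases hdj with h' | h' <;> rcases hdl with h'' | h'' <;>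
          first
          | (left; exact Fin.ext (by omega))
          | (right; left; exact Fin.ext (by omega))
          | (right; right; exact Fin.ext (by omega))
      rcases hx' with rfl | rfl | rfl
      exacts [hi, hj, hl]
  · rintro (h1 | ⟨a, b, hab, rfl⟩)
    · obtain ⟨i, rfl⟩ := Finset.card_eq_one.mp h1
      exact ⟨i, Finset.mem_singleton_self i,
        fun j hj hne => absurd (Finset.mem_singleton.mp hj) hne⟩
    · have hne : a ≠ b := fun hv => by rw [hv] at hab; omega
      rcases adj_E D h (Or.inl hab) with hd | hd
      · refine ⟨b, by simp, fun j hj hjb => ?_⟩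
        rcases Finset.mem_insert.mp hj with rfl | hj'
        · exact hd
        · exact absurd (Finset.mem_singleton.mp hj') hjb
      · refine ⟨a, by simp, fun j hj hja => ?_⟩
        rcases Finset.mem_insert.mp hj with rfl | hj'
        · exact absurd rfl hja
        · rw [Finset.mem_singleton.mp hj']; exact hd

lemma sink_tri (D : DAGraph p) (h : D.skeleton = SimpleGraph.pathGraph p) (k : Fin (p - 2)) :
    (∃ i ∈ tri k, ∀ j ∈ tri k, j ≠ i → D.E j i) ↔
      (D.E (va k) (vb k) ∧ D.E (vc k) (vb k)) := by
  constructor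
  · rintro ⟨i, hi, hsink⟩
    rw [mem_tri] at hi
    rcases hi with h0 | h1 | h2
    · exfalso
      have hiv : i = va k := Fin.ext h0
      subst hiv
      have hcmem : (vc k : Fin p) ∈ tri k := by rw [mem_tri]; right; right; rfl
      have hne : (vc k : Fin p) ≠ va k := by
        simp [va, vc, Fin.ext_iff]
      have := E_adj D h (hsink (vc k) hcmem hne)
      simp only [va, vc] at this
      omega
    · have hiv : i = vb k := Fin.ext h1
      subst hiv
      constructor
      · exact hsink (va k) (by rw [mem_tri]; left; rfl)
          (by simp [va, vb, Fin.ext_iff])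
      · exact hsink (vc k) (by rw [mem_tri]; right; right; rfl)
          (by simp [vb, vc, Fin.ext_iff])
    · exfalso
      have hiv : i = vc k := Fin.ext h2
      subst hiv
      have hamem : (va k : Fin p) ∈ tri k := by rw [mem_tri]; left; rfl
      have hne : (va k : Fin p) ≠ vc k := by
        simp [va, vc, Fin.ext_iff]
      have := E_adj D h (hsink (va k) hamem hne)
      simp only [va, vc] at this
      omega
  · rintro ⟨h1, h2⟩
    refine ⟨vb k, by rw [mem_tri]; right; left; rfl, fun j hj hne => ?_⟩
    rw [mem_tri] at hj
    rcases hj with h0 | hm | hc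
    · have : j = va k := Fin.ext h0
      rw [this]; exact h1
    · exact absurd (Fin.ext hm : j = vb k) hne
    · have : j = vc k := Fin.ext hc
      rw [this]; exact h2

lemma cim_tri (D : DAGraph p) (h : D.skeleton = SimpleGraph.pathGraph p) (k : Fin (p - 2)) :
    D.cim (tri k) = if D.E (va k) (vb k) ∧ D.E (vc k) (vb k) then 1 else 0 := by
  show imsetRel D.E (tri k) = _
  rw [imsetRel]
  exact if_congr (sink_tri D h k) rfl rfl

lemma cim_off (D : DAGraph p) (h : D.skeleton = SimpleGraph.pathGraph p)
    (S : Finset (Fin p)) (hS : ∀ k : Fin (p - 2), S ≠ tri k) :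
    D.cim S = if S.card = 1 ∨ ∃ a b : Fin p, a.1 + 1 = b.1 ∧ S = {a, b} then 1 else 0 := by
  show imsetRel D.E S = _
  rw [imsetRel]
  exact if_congr (sink_off D h S hS) rfl rfl

/-- the DAG realizing a stable set as its v-structure set -/
def pathE (p : ℕ) (S : Finset (Fin (p - 2))) : Fin p → Fin p → Prop :=
  fun a b => (a.1 + 1 = b.1 ∧ ¬ ∃ s ∈ S, b.1 = s.1 + 2) ∨ (b.1 + 1 = a.1 ∧ ∃ s ∈ S, a.1 = s.1 + 2)

noncomputable def pathRank (p : ℕ) (S : Finset (Fin (p - 2))) (v : Fin p) : ℤ :=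
  if ∃ s ∈ S, v.1 = s.1 + 2 then (v.1 : ℤ) - 1
  else if ∃ s ∈ S, v.1 = s.1 + 1 then (v.1 : ℤ) + 1
  else (v.1 : ℤ)

lemma pathRank_lt {S : Finset (Fin (p - 2))}
    (hst : ∀ a ∈ S, ∀ b ∈ S, ¬ (SimpleGraph.pathGraph (p - 2)).Adj a b)
    {a b : Fin p} (hE : pathE p S a b) : pathRank p S a < pathRank p S b := by
  rcases hE with ⟨hab, hb⟩ | ⟨hba, ha⟩
  · rw [pathRank, pathRank, if_neg hb]
    by_cases h2 : ∃ s ∈ S, a.1 = s.1 + 2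
    · rw [if_pos h2]
      split_ifs <;> omega
    · rw [if_neg h2]
      by_cases h3 : ∃ s ∈ S, a.1 = s.1 + 1
      · exfalso
        obtain ⟨s, hs, hval⟩ := h3
        exact hb ⟨s, hs, by omega⟩
      · rw [if_neg h3]
        split_ifs <;> omega
  · obtain ⟨s, hs, hval⟩ := ha
    have hb2 : ¬ ∃ s' ∈ S, b.1 = s'.1 + 2 := by
      rintro ⟨s', hs', h'⟩
      exact hst s' hs' s hs (SimpleGraph.pathGraph_adj.mpr (Or.inl (by omega)))
    have hb1 : ∃ s' ∈ S, b.1 = s'.1 + 1 := ⟨s, hs, by omega⟩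
    rw [pathRank, pathRank, if_pos ⟨s, hs, hval⟩, if_neg hb2, if_pos hb1]
    omega

lemma rank_acyclic {α : Type*} {E : α → α → Prop} {r : α → ℤ}
    (h : ∀ a b, E a b → r a < r b) (i : α) : ¬ Relation.TransGen E i i := by
  intro hi
  have key : ∀ j, Relation.TransGen E i j → r i < r j := by
    intro j hj
    induction hj with
    | single h' => exact h _ _ h'
    | tail _ h' ih => exact ih.trans (h _ _ h')
  exact lt_irrefl _ (key i hi)

def pathDAG (p : ℕ) (S : Finset (Fin (p - 2)))
    (hst : ∀ a ∈ S, ∀ b ∈ S, ¬ (SimpleGraph.pathGraph (p - 2)).Adj a b) : DAGraph p :=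
  ⟨pathE p S, rank_acyclic (fun _ _ h => pathRank_lt hst h)⟩

lemma pathDAG_skeleton (S : Finset (Fin (p - 2)))
    (hst : ∀ a ∈ S, ∀ b ∈ S, ¬ (SimpleGraph.pathGraph (p - 2)).Adj a b) :
    (pathDAG p S hst).skeleton = SimpleGraph.pathGraph p := by
  ext a b
  rw [SimpleGraph.pathGraph_adj]
  show pathE p S a b ∨ pathE p S b a ↔ _
  constructor
  · rintro (hh | hh) <;> rcases hh with ⟨h1, _⟩ | ⟨h1, _⟩ <;> omega
  · intro hab
    rcases hab with h1 | h1
    · by_cases hb : ∃ s ∈ S, b.1 = s.1 + 2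
      · exact Or.inr (Or.inr ⟨h1, hb⟩)
      · exact Or.inl (Or.inl ⟨h1, hb⟩)
    · by_cases ha : ∃ s ∈ S, a.1 = s.1 + 2
      · exact Or.inl (Or.inr ⟨h1, ha⟩)
      · exact Or.inr (Or.inl ⟨h1, ha⟩)

lemma pathDAG_collider (S : Finset (Fin (p - 2)))
    (hst : ∀ a ∈ S, ∀ b ∈ S, ¬ (SimpleGraph.pathGraph (p - 2)).Adj a b) (k : Fin (p - 2)) :
    ((pathDAG p S hst).E (va k) (vb k) ∧ (pathDAG p S hst).E (vc k) (vb k)) ↔ k ∈ S := by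
  constructor
  · rintro ⟨-, h2⟩
    rcases h2 with ⟨h', -⟩ | ⟨-, s, hs, hval⟩
    · simp only [vb, vc] at h'; omega
    · simp only [vc] at hval
      have : s = k := Fin.ext (by omega)
      rwa [← this]
  · intro hk
    constructor
    · left
      refine ⟨rfl, ?_⟩
      rintro ⟨s, hs, hval⟩
      simp only [vb] at hval
      exact hst s hs k hk (SimpleGraph.pathGraph_adj.mpr (Or.inl (by omega)))
    · right
      exact ⟨rfl, k, hk, rfl⟩

noncomputable def colliders (D : DAGraph p) : Finset (Fin (p - 2)) :=
  Finset.univ.filter fun k => D.E (va k) (vb k) ∧ D.E (vc k) (vb k)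

lemma mem_colliders {D : DAGraph p} {k : Fin (p - 2)} :
    k ∈ colliders D ↔ (D.E (va k) (vb k) ∧ D.E (vc k) (vb k)) := by
  simp [colliders]

lemma colliders_stable (D : DAGraph p) (h : D.skeleton = SimpleGraph.pathGraph p) :
    ∀ a ∈ colliders D, ∀ b ∈ colliders D, ¬ (SimpleGraph.pathGraph (p - 2)).Adj a b := by
  intro a ha b hb hadj
  rw [SimpleGraph.pathGraph_adj] at hadj
  rw [mem_colliders] at ha hb
  rcases hadj with hd | hd
  · have e1 : (va b : Fin p) = vb a := Fin.ext (by simp [va, vb]; omega)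
    have e2 : (vb b : Fin p) = vc a := Fin.ext (by simp [vb, vc]; omega)
    have hb1 := hb.1
    rw [e1, e2] at hb1
    exact not_both D hb1 ha.2
  · have e1 : (va a : Fin p) = vb b := Fin.ext (by simp [va, vb]; omega)
    have e2 : (vb a : Fin p) = vc b := Fin.ext (by simp [vb, vc]; omega)
    have ha1 := ha.1
    rw [e1, e2] at ha1
    exact not_both D ha1 hb.2

end Stmt10Aux

open Stmt10Aux

/-- For the path `I_p` on `p ≥ 2` vertices, `CIM_{I_p}` is affinely
equivalent to the stable set polytope `STAB(I_{p−2})`, via the projection sending the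
coordinate indexed by the triple `{i−1, i, i+1}` to coordinate `i−1`. -/
theorem stmt10 (p : ℕ) (hp : 2 ≤ p)
    (ρ : (Finset (Fin p) → ℝ) → (Fin (p - 2) → ℝ))
    (hρ : ∀ (x : Finset (Fin p) → ℝ) (k : Fin (p - 2)),
      ρ x k = x {⟨k.1, by have := k.2; omega⟩, ⟨k.1 + 1, by have := k.2; omega⟩,
                  ⟨k.1 + 2, by have := k.2; omega⟩}) :
    ρ '' (convexHull ℝ
        {x | ∃ D : DAGraph p, D.skeleton = SimpleGraph.pathGraph p ∧ x = D.cim}) =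
      convexHull ℝ {y | ∃ S : Finset (Fin (p - 2)),
        (∀ a ∈ S, ∀ b ∈ S, ¬ (SimpleGraph.pathGraph (p - 2)).Adj a b) ∧
        y = fun v => if v ∈ S then (1 : ℝ) else 0} ∧
    Set.InjOn ρ (convexHull ℝ
        {x | ∃ D : DAGraph p, D.skeleton = SimpleGraph.pathGraph p ∧ x = D.cim}) := by
  have hρ' : ∀ (x : Finset (Fin p) → ℝ) (k : Fin (p - 2)), ρ x k = x (tri k) := hρ
  have hlin : IsLinearMap ℝ ρ := by
    constructor
    · intro x y
      funext k
      simp only [hρ', Pi.add_apply]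
    · intro c x
      funext k
      simp only [hρ', Pi.smul_apply]
  constructor
  · rw [hlin.image_convexHull]
    congr 1
    ext y
    simp only [Set.mem_image, Set.mem_setOf_eq]
    constructor
    · rintro ⟨x, ⟨D, hsk, rfl⟩, rfl⟩
      refine ⟨colliders D, colliders_stable D hsk, ?_⟩
      funext v
      rw [hρ', cim_tri D hsk v]
      exact if_congr mem_colliders.symm rfl rfl
    · rintro ⟨S, hstab, rfl⟩
      refine ⟨(pathDAG p S hstab).cim, ⟨pathDAG p S hstab, pathDAG_skeleton S hstab, rfl⟩, ?_⟩
      funext v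
      rw [hρ', cim_tri _ (pathDAG_skeleton S hstab) v]
      exact if_congr (pathDAG_collider S hstab v) rfl rfl
  · intro x hx y hy hxy
    have key : ∀ z ∈ convexHull ℝ
        {x | ∃ D : DAGraph p, D.skeleton = SimpleGraph.pathGraph p ∧ x = D.cim},
        ∀ S : Finset (Fin p), (∀ k : Fin (p - 2), S ≠ tri k) →
        z S = if S.card = 1 ∨ ∃ a b : Fin p, a.1 + 1 = b.1 ∧ S = {a, b} then 1 else 0 := by
      intro z hz S hS
      set c : ℝ := if S.card = 1 ∨ ∃ a b : Fin p, a.1 + 1 = b.1 ∧ S = {a, b} then 1 else 0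
        with hc
      have hconv : Convex ℝ {w : Finset (Fin p) → ℝ | w S = c} := by
        intro u hu v hv a b ha hb hab
        simp only [Set.mem_setOf_eq] at hu hv ⊢
        simp only [Pi.add_apply, Pi.smul_apply, smul_eq_mul, hu, hv]
        rw [← add_mul, hab, one_mul]
      have hsub : {x | ∃ D : DAGraph p, D.skeleton = SimpleGraph.pathGraph p ∧ x = D.cim}
          ⊆ {w : Finset (Fin p) → ℝ | w S = c} := by
        rintro w ⟨D, hsk, rfl⟩
        exact cim_off D hsk S hS
      exact convexHull_min hsub hconv hz
    funext S
    by_cases hS : ∃ k : Fin (p - 2), S = tri k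
    · obtain ⟨k, rfl⟩ := hS
      have := congrFun hxy k
      rw [hρ', hρ'] at this
      exact this
    · push_neg at hS
      rw [key x hx S hS, key y hy S hS]
end

section
/- Let G' = ([p−1], E') be a vertex-disjoint union of complete graphs K_{p₁}, ..., K_{p_m}, and let G = ([p], E) be obtained by adding a vertex p adjacent to all of [p−1]. Then the number of Markov equivalence classes of DAGs with skeleton G equals 2^{p−1} − Σ_{s=1}^{m} (2^{p_s} − 1). -/
open scoped Classical

/-- The graph on `Fin (n+1)` obtained from a vertex-disjoint union of complete graphs on
`Fin n` (with components given by `comp : Fin n → Fin m`) by adding the extra vertex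
`Fin.last n` adjacent to all other vertices. -/
def starJoin (n m : ℕ) (comp : Fin n → Fin m) : SimpleGraph (Fin (n + 1)) where
  Adj a b := a ≠ b ∧ (a = Fin.last n ∨ b = Fin.last n ∨
    ∃ (ha : a ≠ Fin.last n) (hb : b ≠ Fin.last n),
      comp (a.castPred ha) = comp (b.castPred hb))
  symm := by
    refine ⟨?_⟩
    rintro a b ⟨hne, h⟩
    refine ⟨hne.symm, ?_⟩
    rcases h with h | h | ⟨ha, hb, hc⟩
    · exact Or.inr (Or.inl h)
    · exact Or.inl h
    · exact Or.inr (Or.inr ⟨hb, ha, hc.symm⟩)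
  loopless := ⟨fun a h => h.1 rfl⟩

lemma not_both {p : ℕ} (D : DAGraph p) {a b : Fin p} (h : D.E a b) : ¬ D.E b a :=
  fun h' => D.acyclic a (Relation.TransGen.head h (Relation.TransGen.single h'))

lemma exists_sink {p : ℕ} (D : DAGraph p) (S : Finset (Fin p)) (hne : S.Nonempty)
    (hclique : ∀ a ∈ S, ∀ b ∈ S, a ≠ b → D.E a b ∨ D.E b a) :
    ∃ i ∈ S, ∀ j ∈ S, j ≠ i → D.E j i := by
  induction S using Finset.strongInduction with
  | _ S ih =>
    obtain ⟨a, ha⟩ := hne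
    by_cases h1 : (S.erase a).Nonempty
    · obtain ⟨i, hi, hsink⟩ := ih (S.erase a) (Finset.erase_ssubset ha) h1
        (fun x hx y hy hxy => hclique x (Finset.mem_of_mem_erase hx) y (Finset.mem_of_mem_erase hy) hxy)
      have hiS : i ∈ S := Finset.mem_of_mem_erase hi
      have hia : i ≠ a := Finset.ne_of_mem_erase hi
      by_cases hai : D.E a i
      · refine ⟨i, hiS, fun j hj hji => ?_⟩
        by_cases hja : j = a
        · exact hja ▸ hai
        · exact hsink j (Finset.mem_erase.2 ⟨hja, hj⟩) hji
      · have hEia : D.E i a := (hclique a ha i hiS (Ne.symm hia)).resolve_left hai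
        refine ⟨a, ha, fun j hj hja => ?_⟩
        by_contra hnot
        have hEaj : D.E a j := (hclique j hj a ha hja).resolve_left hnot
        by_cases hji : j = i
        · exact hai (hji ▸ hEaj)
        · have hEji : D.E j i := hsink j (Finset.mem_erase.2 ⟨hja, hj⟩) hji
          exact D.acyclic a (Relation.TransGen.head hEaj
            (Relation.TransGen.head hEji (Relation.TransGen.single hEia)))
    · have hS : S = {a} := by
        apply Finset.eq_singleton_iff_unique_mem.2
        refine ⟨ha, fun x hx => ?_⟩
        by_contra hxa
        exact h1 ⟨x, Finset.mem_erase.2 ⟨hxa, hx⟩⟩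
      refine ⟨a, ha, fun j hj hja => absurd (hS ▸ hj) (by simp [hja])⟩

variable {n m : ℕ} (comp : Fin n → Fin m)

/-- weight function used to orient edges -/
noncomputable def wA (A : Finset (Fin n)) (x : Fin (n + 1)) : ℕ :=
  if h : x = Fin.last n then 2 * n + 1
  else if x.castPred h ∈ A then (x : ℕ) else 2 * n + 2 + (x : ℕ)

lemma wA_inj (A : Finset (Fin n)) {x y : Fin (n + 1)} (h : wA A x = wA A y) : x = y := by
  unfold wA at h
  by_cases hx : x = Fin.last n <;> by_cases hy : y = Fin.last n
  · exact hx.trans hy.symm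
  · have hyv : (y : ℕ) < n := Fin.val_lt_last hy
    simp only [dif_pos hx, dif_neg hy] at h
    split_ifs at h <;> omega
  · have hxv : (x : ℕ) < n := Fin.val_lt_last hx
    simp only [dif_neg hx, dif_pos hy] at h
    split_ifs at h <;> omega
  · have hxv : (x : ℕ) < n := Fin.val_lt_last hx
    have hyv : (y : ℕ) < n := Fin.val_lt_last hy
    simp only [dif_neg hx, dif_neg hy] at h
    have : (x : ℕ) = (y : ℕ) := by split_ifs at h <;> omega
    exact Fin.ext this

noncomputable def Dof (A : Finset (Fin n)) : DAGraph (n + 1) where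
  E a b := (starJoin n m comp).Adj a b ∧ wA A a < wA A b
  acyclic := by
    intro i hi
    have key : ∀ a b : Fin (n + 1), Relation.TransGen
        (fun a b => (starJoin n m comp).Adj a b ∧ wA A a < wA A b) a b → wA A a < wA A b := by
      intro a b h
      induction h with
      | single h => exact h.2
      | tail _ h ih => exact ih.trans h.2
    exact lt_irrefl _ (key i i hi)

lemma Dof_skeleton (A : Finset (Fin n)) : (Dof comp A).skeleton = starJoin n m comp := by
  ext a b
  constructor
  · rintro (⟨h, _⟩ | ⟨h, _⟩)
    · exact h
    · exact h.symm
  · intro h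
    have hne : wA A a ≠ wA A b := fun he => h.ne (wA_inj A he)
    rcases lt_or_gt_of_ne hne with hlt | hlt
    · exact Or.inl ⟨h, hlt⟩
    · exact Or.inr ⟨h.symm, hlt⟩

lemma Dof_parents (A : Finset (Fin n)) (v : Fin n) :
    (Dof comp A).E v.castSucc (Fin.last n) ↔ v ∈ A := by
  have hvl : (v.castSucc : Fin (n + 1)) ≠ Fin.last n := (Fin.castSucc_lt_last v).ne
  constructor
  · rintro ⟨_, hw⟩
    unfold wA at hw
    rw [dif_neg hvl, dif_pos rfl] at hw
    by_contra hv
    rw [if_neg (by simpa using hv)] at hw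
    omega
  · intro hv
    refine ⟨⟨hvl, Or.inr (Or.inl rfl)⟩, ?_⟩
    unfold wA
    rw [dif_neg hvl, dif_pos rfl, if_pos (by simpa using hv)]
    have := v.isLt
    simp only [Fin.coe_castSucc]
    omega

def Pred (A : Finset (Fin n)) (S : Finset (Fin (n + 1))) : Prop :=
  S.Nonempty ∧ ((∃ s, ∀ v : Fin n, v.castSucc ∈ S → comp v = s) ∨
    (Fin.last n ∈ S ∧ ∀ v : Fin n, v.castSucc ∈ S → v ∈ A))

noncomputable def Fim (A : Finset (Fin n)) : Finset (Fin (n + 1)) → ℝ :=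
  fun S => if Pred comp A S then 1 else 0

/-- the parent set of the last vertex -/
noncomputable def pset (D : DAGraph (n + 1)) : Finset (Fin n) :=
  Finset.univ.filter fun v => D.E v.castSucc (Fin.last n)

lemma cim_eq_Fim (D : DAGraph (n + 1)) (hsk : D.skeleton = starJoin n m comp) :
    D.cim = Fim comp (pset D) := by
  have hadj : ∀ a b, (D.E a b ∨ D.E b a) ↔ (starJoin n m comp).Adj a b := by
    intro a b
    rw [← hsk]; rfl
  funext S
  unfold DAGraph.cim imsetRel Fim
  congr 1
  apply propext
  constructor
  · rintro ⟨i, hi, hsink⟩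
    refine ⟨⟨i, hi⟩, ?_⟩
    by_cases hil : i = Fin.last n
    · refine Or.inr ⟨hil ▸ hi, fun v hv => ?_⟩
      have : D.E v.castSucc (Fin.last n) := hil ▸ hsink v.castSucc hv
        (by rw [hil]; exact (Fin.castSucc_lt_last v).ne)
      simpa [pset] using this
    · obtain ⟨u, rfl⟩ := Fin.exists_castSucc_eq.2 hil
      refine Or.inl ⟨comp u, fun v hv => ?_⟩
      by_cases hvu : v = u
      · rw [hvu]
      · have hE : D.E v.castSucc u.castSucc := hsink v.castSucc hv
          (by simpa using hvu)
        have hAdj : (starJoin n m comp).Adj v.castSucc u.castSucc :=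
          (hadj _ _).1 (Or.inl hE)
        obtain ⟨_, h | h | ⟨hv', hu', hc⟩⟩ := hAdj
        · exact absurd h (Fin.castSucc_lt_last v).ne
        · exact absurd h (Fin.castSucc_lt_last u).ne
        · simpa using hc
  · rintro ⟨hne, hP | ⟨hlast, hpar⟩⟩
    · obtain ⟨s, hs⟩ := hP
      refine exists_sink D S hne fun a ha b hb hab => (hadj a b).2 ?_
      refine ⟨hab, ?_⟩
      by_cases hal : a = Fin.last n
      · exact Or.inl hal
      by_cases hbl : b = Fin.last n
      · exact Or.inr (Or.inl hbl)
      refine Or.inr (Or.inr ⟨hal, hbl, ?_⟩)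
      obtain ⟨u, rfl⟩ := Fin.exists_castSucc_eq.2 hal
      obtain ⟨v, rfl⟩ := Fin.exists_castSucc_eq.2 hbl
      simp only [Fin.castPred_castSucc]
      rw [hs u ha, hs v hb]
    · refine ⟨Fin.last n, hlast, fun j hj hjl => ?_⟩
      obtain ⟨v, rfl⟩ := Fin.exists_castSucc_eq.2 hjl
      have := hpar v hj
      simpa [pset] using this

def small (A : Finset (Fin n)) : Prop := ∃ s, ∀ v ∈ A, comp v = s

lemma Fim_eq_iff (A A' : Finset (Fin n)) :
    Fim comp A = Fim comp A' ↔ ∀ S, Pred comp A S ↔ Pred comp A' S := by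
  constructor
  · intro h S
    have := congrFun h S
    unfold Fim at this
    constructor
    · intro hP
      by_contra hP'
      rw [if_pos hP, if_neg hP'] at this
      exact one_ne_zero this
    · intro hP
      by_contra hP'
      rw [if_neg hP', if_pos hP] at this
      exact one_ne_zero this.symm
  · intro h
    funext S
    unfold Fim
    by_cases hP : Pred comp A S
    · rw [if_pos hP, if_pos ((h S).1 hP)]
    · rw [if_neg hP, if_neg (fun hh => hP ((h S).2 hh))]

lemma Pred_of_small {A : Finset (Fin n)} (hA : small comp A) (S : Finset (Fin (n + 1))) :
    Pred comp A S ↔ S.Nonempty ∧ ∃ s, ∀ v : Fin n, v.castSucc ∈ S → comp v = s := by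
  constructor
  · rintro ⟨hne, h | ⟨_, hmem⟩⟩
    · exact ⟨hne, h⟩
    · obtain ⟨s, hs⟩ := hA
      exact ⟨hne, s, fun v hv => hs v (hmem v hv)⟩
  · rintro ⟨hne, h⟩
    exact ⟨hne, Or.inl h⟩

lemma Fim_small {A A' : Finset (Fin n)} (hA : small comp A) (hA' : small comp A') :
    Fim comp A = Fim comp A' := by
  rw [Fim_eq_iff]
  intro S
  rw [Pred_of_small comp hA, Pred_of_small comp hA']

lemma nonsmall_recover {A A' : Finset (Fin n)} (hA : ¬ small comp A)
    (h : Fim comp A = Fim comp A') : A ⊆ A' ∧ ¬ small comp A' := by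
  set S₀ : Finset (Fin (n + 1)) :=
    insert (Fin.last n) (A.image Fin.castSucc) with hS₀
  have hmemS₀ : ∀ v : Fin n, v.castSucc ∈ S₀ ↔ v ∈ A := by
    intro v
    simp only [hS₀, Finset.mem_insert, Finset.mem_image]
    constructor
    · rintro (h | ⟨u, hu, he⟩)
      · exact absurd h (Fin.castSucc_lt_last v).ne
      · rwa [← Fin.castSucc_injective n he]
    · intro hv; exact Or.inr ⟨v, hv, rfl⟩
  have hP : Pred comp A S₀ := by
    refine ⟨⟨Fin.last n, Finset.mem_insert_self _ _⟩,
      Or.inr ⟨Finset.mem_insert_self _ _, fun v hv => (hmemS₀ v).1 hv⟩⟩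
  have hP' : Pred comp A' S₀ := ((Fim_eq_iff comp A A').1 h S₀).1 hP
  rcases hP' with ⟨_, hfirst | ⟨_, hsec⟩⟩
  · exact absurd ⟨hfirst.choose, fun v hv => hfirst.choose_spec v ((hmemS₀ v).2 hv)⟩ hA
  · have hsub : A ⊆ A' := fun v hv => hsec v ((hmemS₀ v).2 hv)
    refine ⟨hsub, fun ⟨s, hs⟩ => hA ⟨s, fun v hv => hs v (hsub hv)⟩⟩

lemma Fim_injOn_nonsmall {A A' : Finset (Fin n)} (hA : ¬ small comp A)
    (h : Fim comp A = Fim comp A') : A = A' := by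
  obtain ⟨h1, hA'⟩ := nonsmall_recover comp hA h
  obtain ⟨h2, _⟩ := nonsmall_recover comp hA' h.symm
  exact Finset.Subset.antisymm h1 h2

lemma set_eq :
    {x : Finset (Fin (n + 1)) → ℝ |
        ∃ D : DAGraph (n + 1), D.skeleton = starJoin n m comp ∧ x = D.cim} =
      Fim comp '' Set.univ := by
  ext x
  simp only [Set.mem_setOf_eq, Set.image_univ, Set.mem_range]
  constructor
  · rintro ⟨D, hsk, rfl⟩
    exact ⟨pset D, (cim_eq_Fim comp D hsk).symm⟩
  · rintro ⟨A, rfl⟩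
    refine ⟨Dof comp A, Dof_skeleton comp A, ?_⟩
    rw [cim_eq_Fim comp (Dof comp A) (Dof_skeleton comp A)]
    have hps : pset (Dof comp A) = A := by
      unfold pset
      ext v
      simp [Dof_parents comp A v]
    rw [hps]

lemma count_main (hm : 0 < m) :
    (Fim comp '' Set.univ).ncard =
      2 ^ n - ∑ s : Fin m, (2 ^ (Finset.univ.filter fun v => comp v = s).card - 1) := by
  classical
  have hs0 : small comp (∅ : Finset (Fin n)) := ⟨⟨0, hm⟩, fun v hv => absurd hv (by simp)⟩
  set T : Finset (Finset (Fin n)) := Finset.univ.filter (fun A => ¬ small comp A) with hT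
  set Sm : Finset (Finset (Fin n)) := Finset.univ.filter (fun A => small comp A) with hSm
  -- the image as a finset
  have himg : Fim comp '' Set.univ = ↑(insert (Fim comp ∅) (T.image (Fim comp))) := by
    ext x
    simp only [Set.image_univ, Set.mem_range, Finset.coe_insert, Set.mem_insert_iff,
      Finset.coe_image, Set.mem_image, Finset.mem_coe, hT, Finset.mem_filter,
      Finset.mem_univ, true_and]
    constructor
    · rintro ⟨A, rfl⟩
      by_cases hA : small comp A
      · exact Or.inl (Fim_small comp hA hs0)
      · exact Or.inr ⟨A, hA, rfl⟩
    · rintro (rfl | ⟨A, _, rfl⟩)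
      · exact ⟨∅, rfl⟩
      · exact ⟨A, rfl⟩
  rw [himg, Set.ncard_coe_finset]
  have hnot : Fim comp ∅ ∉ T.image (Fim comp) := by
    simp only [Finset.mem_image, hT, Finset.mem_filter, Finset.mem_univ, true_and]
    rintro ⟨A, hA, he⟩
    exact (nonsmall_recover comp hA he).2 hs0
  rw [Finset.card_insert_of_notMem hnot,
    Finset.card_image_of_injOn (fun A hA A' _ h => Fim_injOn_nonsmall comp
      (by simpa [hT] using hA) h)]
  -- cardinality of the small family
  have hSmcard : Sm.card =
      1 + ∑ s : Fin m, (2 ^ (Finset.univ.filter fun v => comp v = s).card - 1) := by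
    have hSmeq : Sm = insert ∅ (Finset.univ.biUnion fun s : Fin m =>
        ((Finset.univ.filter fun v => comp v = s).powerset.erase ∅)) := by
      ext A
      simp only [hSm, Finset.mem_filter, Finset.mem_univ, true_and, Finset.mem_insert,
        Finset.mem_biUnion, Finset.mem_erase, Finset.mem_powerset]
      constructor
      · intro hA
        by_cases hAe : A = ∅
        · exact Or.inl hAe
        · obtain ⟨s, hs⟩ := hA
          exact Or.inr ⟨s, hAe, fun v hv => by
            simp only [Finset.mem_filter, Finset.mem_univ, true_and]; exact hs v hv⟩
      · rintro (rfl | ⟨s, _, hsub⟩)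
        · exact hs0
        · exact ⟨s, fun v hv => by simpa using hsub hv⟩
    rw [hSmeq, Finset.card_insert_of_notMem (by simp), Finset.card_biUnion]
    · rw [Nat.add_comm]
      congr 1
      refine Finset.sum_congr rfl fun s _ => ?_
      rw [Finset.card_erase_of_mem (by simp), Finset.card_powerset]
    · intro s _ t _ hst
      refine Finset.disjoint_left.2 fun A hA hA' => ?_
      simp only [Finset.mem_erase, Finset.mem_powerset] at hA hA'
      obtain ⟨v, hv⟩ := Finset.nonempty_iff_ne_empty.2 hA.1
      have h1 := hA.2 hv
      have h2 := hA'.2 hv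
      simp only [Finset.mem_filter] at h1 h2
      exact hst (h1.2 ▸ h2.2 ▸ rfl)
  have htotal : Sm.card + T.card = 2 ^ n := by
    rw [hSm, hT, Finset.card_filter_add_card_filter_not,
      Finset.card_univ, Fintype.card_finset, Fintype.card_fin]
  omega


/-- If `G'` is a vertex-disjoint union of complete graphs
`K_{p₁}, …, K_{p_m}` on `[p−1]` and `G` adds a vertex adjacent to all of `[p−1]`, the
number of Markov equivalence classes of DAGs with skeleton `G` (i.e. the number of
distinct characteristic imsets) is `2^{p−1} − ∑ₛ (2^{pₛ} − 1)`. -/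
theorem stmt13 (n m : ℕ) (comp : Fin n → Fin m) (hsurj : Function.Surjective comp) :
    Set.ncard {x : Finset (Fin (n + 1)) → ℝ |
        ∃ D : DAGraph (n + 1), D.skeleton = starJoin n m comp ∧ x = D.cim} =
      2 ^ n - ∑ s : Fin m, (2 ^ (Finset.univ.filter fun v => comp v = s).card - 1) := by
  rw [set_eq comp]
  rcases Nat.eq_zero_or_pos m with hm | hm
  · subst hm
    have hn : n = 0 := by
      by_contra h
      exact (comp ⟨0, Nat.pos_of_ne_zero h⟩).elim0
    subst hn
    have h1 : (Set.univ : Set (Finset (Fin 0))) = {∅} := by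
      ext A
      simp only [Set.mem_univ, Set.mem_singleton_iff, true_iff]
      exact Finset.eq_empty_of_isEmpty A
    rw [h1, Set.image_singleton, Set.ncard_singleton]
    simp
  · exact count_main comp hm
end

section
/- Let G = K_p \ {1,2} be the complete graph on [p] with the single edge {1,2} removed, where p ≥ 3. Then CIM_G is a simplex of dimension 2^{p−2} − 1; equivalently, there are exactly 2^{p−2} Markov equivalence classes of DAGs with skeleton G and their characteristic imsets are affinely independent. -/
open scoped Classical

/-- The complete graph on `Fin p` with the single edge between vertices `0` and `1`
(i.e. vertices `1` and `2` in one-based notation) removed. -/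
def completeMinus (p : ℕ) : SimpleGraph (Fin p) where
  Adj a b := a ≠ b ∧ ¬(((a : ℕ) = 0 ∧ (b : ℕ) = 1) ∨ ((a : ℕ) = 1 ∧ (b : ℕ) = 0))
  symm := by
    constructor
    rintro a b ⟨h1, h2⟩
    exact ⟨h1.symm, by tauto⟩
  loopless := ⟨fun a h => h.1 rfl⟩

lemma tournament_sink {p : ℕ} (E : Fin p → Fin p → Prop)
    (hac : ∀ i, ¬ Relation.TransGen E i i)
    (S : Finset (Fin p)) (hS : S.Nonempty)
    (htot : ∀ a ∈ S, ∀ b ∈ S, a ≠ b → E a b ∨ E b a) :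
    ∃ m ∈ S, ∀ j ∈ S, j ≠ m → E j m := by
  induction S using Finset.strongInduction with
  | _ S ih =>
    obtain ⟨a, ha⟩ := hS
    by_cases h : (S.erase a).Nonempty
    · obtain ⟨m, hm, hsink⟩ := ih (S.erase a) (Finset.erase_ssubset ha) h
        (fun x hx y hy => htot x (Finset.mem_of_mem_erase hx) y (Finset.mem_of_mem_erase hy))
      have hmS := Finset.mem_of_mem_erase hm
      have hma : m ≠ a := Finset.ne_of_mem_erase hm
      rcases htot a ha m hmS (fun e => hma e.symm) with hE | hE
      · refine ⟨m, hmS, fun j hj hjm => ?_⟩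
        by_cases hja : j = a
        · exact hja ▸ hE
        · exact hsink j (Finset.mem_erase.2 ⟨hja, hj⟩) hjm
      · refine ⟨a, ha, fun j hj hja => ?_⟩
        by_cases hjm : j = m
        · exact hjm ▸ hE
        · have hj' : j ∈ S.erase a := Finset.mem_erase.2 ⟨hja, hj⟩
          rcases htot j hj a ha hja with h1 | h1
          · exact h1
          · exact absurd (((Relation.TransGen.single h1).tail (hsink j hj' hjm)).tail hE) (hac a)
    · refine ⟨a, ha, fun j hj hja => ?_⟩
      exact absurd (Finset.mem_erase.2 ⟨hja, hj⟩) (fun hmem => h ⟨j, hmem⟩)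

lemma adjCM {p : ℕ} {a b : Fin p} (hab : a ≠ b) (h2 : 2 ≤ (a : ℕ) ∨ 2 ≤ (b : ℕ)) :
    (completeMinus p).Adj a b :=
  ⟨hab, by omega⟩

section Aux
variable (p : ℕ) (hp : 3 ≤ p)

def stmt15v0 : Fin p := ⟨0, by omega⟩
def stmt15v1 : Fin p := ⟨1, by omega⟩

def stmt15R : Finset (Fin p) := Finset.univ.filter (fun i => 2 ≤ (i : ℕ))

noncomputable def stmt15cset (D : DAGraph p) : Finset (Fin p) :=
  Finset.univ.filter (fun i => 2 ≤ (i : ℕ) ∧ D.E (stmt15v0 p hp) i ∧ D.E (stmt15v1 p hp) i)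

noncomputable def stmt15f (C : Finset (Fin p)) : Finset (Fin p) → ℝ :=
  fun S => if S.Nonempty ∧ (stmt15v0 p hp ∈ S ∧ stmt15v1 p hp ∈ S → (S ∩ C).Nonempty) then 1 else 0

lemma stmt15cset_subset (D : DAGraph p) : stmt15cset p hp D ⊆ stmt15R p := by
  intro i hi
  simp only [stmt15cset, Finset.mem_filter] at hi
  simp only [stmt15R, Finset.mem_filter]
  exact ⟨Finset.mem_univ _, hi.2.1⟩

lemma stmt15cim_eq (D : DAGraph p) (hsk : D.skeleton = completeMinus p) :
    D.cim = stmt15f p hp (stmt15cset p hp D) := by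
  have hadj : ∀ a b, (D.E a b ∨ D.E b a) ↔ (completeMinus p).Adj a b := by
    intro a b
    rw [show (D.E a b ∨ D.E b a) ↔ D.skeleton.Adj a b from Iff.rfl, hsk]
  funext S
  show imsetRel D.E S = _
  have v01 : stmt15v0 p hp ≠ stmt15v1 p hp := by
    simp [stmt15v0, stmt15v1, Fin.ext_iff]
  have key : (∃ i ∈ S, ∀ j ∈ S, j ≠ i → D.E j i) ↔
      (S.Nonempty ∧ (stmt15v0 p hp ∈ S ∧ stmt15v1 p hp ∈ S → (S ∩ stmt15cset p hp D).Nonempty)) := by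
    constructor
    · rintro ⟨i, hiS, hsink⟩
      refine ⟨⟨i, hiS⟩, fun ⟨h0, h1⟩ => ?_⟩
      have hi0 : i ≠ stmt15v0 p hp := by
        rintro rfl
        have h10 : D.E (stmt15v1 p hp) (stmt15v0 p hp) := hsink _ h1 v01.symm
        have : (completeMinus p).Adj (stmt15v1 p hp) (stmt15v0 p hp) := (hadj _ _).1 (Or.inl h10)
        exact this.2 (Or.inr ⟨rfl, rfl⟩)
      have hi1 : i ≠ stmt15v1 p hp := by
        rintro rfl
        have h01 : D.E (stmt15v0 p hp) (stmt15v1 p hp) := hsink _ h0 v01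
        have : (completeMinus p).Adj (stmt15v0 p hp) (stmt15v1 p hp) := (hadj _ _).1 (Or.inl h01)
        exact this.2 (Or.inl ⟨rfl, rfl⟩)
      have hival : 2 ≤ (i : ℕ) := by
        have h0' : (i : ℕ) ≠ 0 := fun h => hi0 (Fin.ext h)
        have h1' : (i : ℕ) ≠ 1 := fun h => hi1 (Fin.ext h)
        omega
      refine ⟨i, Finset.mem_inter.2 ⟨hiS, ?_⟩⟩
      simp only [stmt15cset, Finset.mem_filter]
      exact ⟨Finset.mem_univ _, hival, hsink _ h0 (Ne.symm hi0), hsink _ h1 (Ne.symm hi1)⟩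
    · rintro ⟨hSne, hcol⟩
      by_cases hb : stmt15v0 p hp ∈ S ∧ stmt15v1 p hp ∈ S
      · obtain ⟨c, hc⟩ := hcol hb
        rw [Finset.mem_inter] at hc
        obtain ⟨hcS, hcC⟩ := hc
        simp only [stmt15cset, Finset.mem_filter] at hcC
        obtain ⟨-, hcval, hc0, hc1⟩ := hcC
        set M : Finset (Fin p) := S.filter (fun i => 2 ≤ (i : ℕ)) with hM
        have hcM : c ∈ M := Finset.mem_filter.2 ⟨hcS, hcval⟩
        have htot : ∀ a ∈ M, ∀ b ∈ M, a ≠ b → D.E a b ∨ D.E b a := by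
          intro a haM b hbM hab
          exact (hadj a b).2 (adjCM hab (Or.inl (Finset.mem_filter.1 haM).2))
        obtain ⟨m, hmM, hmsink⟩ := tournament_sink D.E D.acyclic M ⟨c, hcM⟩ htot
        have hm2 := (Finset.mem_filter.1 hmM).2
        have hmS := (Finset.mem_filter.1 hmM).1
        have hm0 : m ≠ stmt15v0 p hp := by simp [stmt15v0, Fin.ext_iff]; omega
        have hm1 : m ≠ stmt15v1 p hp := by simp [stmt15v1, Fin.ext_iff]; omega
        have hE0m : D.E (stmt15v0 p hp) m := by
          by_cases hcm : c = m
          · exact hcm ▸ hc0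
          · rcases (hadj (stmt15v0 p hp) m).2 (adjCM (Ne.symm hm0) (Or.inr hm2)) with h | h
            · exact h
            · exact absurd (((Relation.TransGen.single h).tail hc0).tail (hmsink c hcM hcm))
                (D.acyclic m)
        have hE1m : D.E (stmt15v1 p hp) m := by
          by_cases hcm : c = m
          · exact hcm ▸ hc1
          · rcases (hadj (stmt15v1 p hp) m).2 (adjCM (Ne.symm hm1) (Or.inr hm2)) with h | h
            · exact h
            · exact absurd (((Relation.TransGen.single h).tail hc1).tail (hmsink c hcM hcm))
                (D.acyclic m)
        refine ⟨m, hmS, fun j hjS hjm => ?_⟩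
        by_cases hj0 : j = stmt15v0 p hp
        · exact hj0 ▸ hE0m
        by_cases hj1 : j = stmt15v1 p hp
        · exact hj1 ▸ hE1m
        have hj2 : 2 ≤ (j : ℕ) := by
          have h0' : (j : ℕ) ≠ 0 := fun h => hj0 (Fin.ext h)
          have h1' : (j : ℕ) ≠ 1 := fun h => hj1 (Fin.ext h)
          omega
        exact hmsink j (Finset.mem_filter.2 ⟨hjS, hj2⟩) hjm
      · have htot : ∀ a ∈ S, ∀ b ∈ S, a ≠ b → D.E a b ∨ D.E b a := by
          intro a haS b hbS hab
          refine (hadj a b).2 ⟨hab, ?_⟩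
          rintro (⟨ha0, hb1⟩ | ⟨ha1, hb0⟩)
          · exact hb ⟨(Fin.ext ha0 : a = stmt15v0 p hp) ▸ haS,
              (Fin.ext hb1 : b = stmt15v1 p hp) ▸ hbS⟩
          · exact hb ⟨(Fin.ext hb0 : b = stmt15v0 p hp) ▸ hbS,
              (Fin.ext ha1 : a = stmt15v1 p hp) ▸ haS⟩
        obtain ⟨m, hmS, hmsink⟩ := tournament_sink D.E D.acyclic S hSne htot
        exact ⟨m, hmS, hmsink⟩
  simp only [imsetRel, stmt15f, key]
end Aux

section Aux2
variable (p : ℕ) (hp : 3 ≤ p)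

/-- rank function used to orient edges -/
noncomputable def stmt15rank (C : Finset (Fin p)) : Fin p → ℕ := fun v =>
  if (v : ℕ) = 0 then p else if (v : ℕ) = 1 then p + 1
  else if v ∈ C then p + 2 + (v : ℕ) else (v : ℕ)

lemma stmt15rank_inj (C : Finset (Fin p)) : Function.Injective (stmt15rank p C) := by
  intro a b hab
  unfold stmt15rank at hab
  have ha := a.isLt
  have hb := b.isLt
  split_ifs at hab <;> (apply Fin.ext; omega)

noncomputable def stmt15D (C : Finset (Fin p)) : DAGraph p where
  E a b := (completeMinus p).Adj a b ∧ stmt15rank p C a < stmt15rank p C b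
  acyclic := by
    intro i hi
    have mono : ∀ a b, Relation.TransGen
        (fun a b => (completeMinus p).Adj a b ∧ stmt15rank p C a < stmt15rank p C b) a b →
        stmt15rank p C a < stmt15rank p C b := by
      intro a b h
      induction h with
      | single h => exact h.2
      | tail _ h ih => exact ih.trans h.2
    exact lt_irrefl _ (mono i i hi)

lemma stmt15D_skeleton (C : Finset (Fin p)) : (stmt15D p C).skeleton = completeMinus p := by
  ext a b
  show ((completeMinus p).Adj a b ∧ _) ∨ ((completeMinus p).Adj b a ∧ _) ↔ (completeMinus p).Adj a b
  constructor
  · rintro (⟨h, -⟩ | ⟨h, -⟩)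
    · exact h
    · exact h.symm
  · intro h
    rcases lt_or_gt_of_ne (fun e => h.1 (stmt15rank_inj p C e)) with hlt | hlt
    · exact Or.inl ⟨h, hlt⟩
    · exact Or.inr ⟨h.symm, hlt⟩

lemma stmt15D_cset (C : Finset (Fin p)) (hC : C ⊆ stmt15R p) :
    stmt15cset p hp (stmt15D p C) = C := by
  ext i
  simp only [stmt15cset, Finset.mem_filter, Finset.mem_univ, true_and]
  constructor
  · rintro ⟨hi2, ⟨-, hr0⟩, -⟩
    by_contra hiC
    have : stmt15rank p C (stmt15v0 p hp) = p := by simp [stmt15rank, stmt15v0]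
    have hri : stmt15rank p C i = (i : ℕ) := by
      simp only [stmt15rank]
      rw [if_neg (by omega), if_neg (by omega), if_neg hiC]
    have := i.isLt
    omega
  · intro hiC
    have hi2 : 2 ≤ (i : ℕ) := by
      have := hC hiC
      simpa [stmt15R] using this
    have hri : stmt15rank p C i = p + 2 + (i : ℕ) := by
      simp only [stmt15rank]
      rw [if_neg (by omega), if_neg (by omega), if_pos hiC]
    have hr0 : stmt15rank p C (stmt15v0 p hp) = p := by simp [stmt15rank, stmt15v0]
    have hr1 : stmt15rank p C (stmt15v1 p hp) = p + 1 := by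
      simp only [stmt15rank, stmt15v1]
      norm_num
    refine ⟨hi2, ⟨adjCM (by simp [stmt15v0, Fin.ext_iff]; omega) (Or.inr hi2), by omega⟩,
      ⟨adjCM (by simp [stmt15v1, Fin.ext_iff]; omega) (Or.inr hi2), by omega⟩⟩

/-- evaluation of `stmt15f` at sets `{v0,v1} ∪ T` with `T ⊆ R` -/
lemma stmt15f_eval (C T : Finset (Fin p)) (hC : C ⊆ stmt15R p) :
    stmt15f p hp C (insert (stmt15v0 p hp) (insert (stmt15v1 p hp) T)) =
      if (T ∩ C).Nonempty then 1 else 0 := by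
  have hCv : ∀ c ∈ C, 2 ≤ (c : ℕ) := by
    intro c hc
    have := hC hc
    simpa [stmt15R] using this
  have hinter : (insert (stmt15v0 p hp) (insert (stmt15v1 p hp) T)) ∩ C = T ∩ C := by
    ext x
    simp only [Finset.mem_inter, Finset.mem_insert]
    constructor
    · rintro ⟨(rfl | rfl | hx), hxC⟩
      · exact absurd (hCv _ hxC) (by simp [stmt15v0])
      · exact absurd (hCv _ hxC) (by simp [stmt15v1])
      · exact ⟨hx, hxC⟩
    · rintro ⟨hx, hxC⟩
      exact ⟨Or.inr (Or.inr hx), hxC⟩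
  simp only [stmt15f, hinter]
  by_cases hT : (T ∩ C).Nonempty
  · rw [if_pos ⟨⟨_, Finset.mem_insert_self _ _⟩, fun _ => hT⟩, if_pos hT]
  · rw [if_neg, if_neg hT]
    rintro ⟨-, himp⟩
    exact hT (himp ⟨Finset.mem_insert_self _ _, Finset.mem_insert.2 (Or.inr (Finset.mem_insert_self _ _))⟩)

lemma stmt15f_injOn : Set.InjOn (stmt15f p hp) {C : Finset (Fin p) | C ⊆ stmt15R p} := by
  intro C1 h1 C2 h2 heq
  have key : ∀ C ⊆ stmt15R p, ∀ i : Fin p, i ∈ C ↔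
      (2 ≤ (i : ℕ) ∧ stmt15f p hp C (insert (stmt15v0 p hp) (insert (stmt15v1 p hp) {i})) = 1) := by
    intro C hC i
    rw [stmt15f_eval p hp C {i} hC]
    constructor
    · intro hiC
      have hi2 : 2 ≤ (i : ℕ) := by
        have := hC hiC
        simpa [stmt15R] using this
      refine ⟨hi2, if_pos ⟨i, by simp [hiC]⟩⟩
    · rintro ⟨hi2, hval⟩
      by_contra hiC
      rw [if_neg (by simp [hiC])] at hval
      norm_num at hval
  ext i
  rw [key C1 h1 i, key C2 h2 i, heq]

include hp in
lemma stmt15R_card : (stmt15R p).card = p - 2 := by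
  have : stmt15R p = Finset.univ \ {stmt15v0 p hp, stmt15v1 p hp} := by
    ext i
    simp only [stmt15R, Finset.mem_filter, Finset.mem_univ, true_and, Finset.mem_sdiff,
      Finset.mem_insert, Finset.mem_singleton]
    constructor
    · intro h
      rintro (rfl | rfl) <;> simp [stmt15v0, stmt15v1] at h
    · intro h
      have h0 : (i : ℕ) ≠ 0 := fun e => h (Or.inl (Fin.ext e))
      have h1 : (i : ℕ) ≠ 1 := fun e => h (Or.inr (Fin.ext e))
      omega
  rw [this, Finset.card_sdiff_of_subset (Finset.subset_univ _), Finset.card_univ, Fintype.card_fin]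
  have : ({stmt15v0 p hp, stmt15v1 p hp} : Finset (Fin p)).card = 2 := by
    rw [Finset.card_insert_of_notMem (by simp [stmt15v0, stmt15v1, Fin.ext_iff]),
      Finset.card_singleton]
  omega

end Aux2

/-- For `G = K_p` minus the edge `{1,2}` with `p ≥ 3`, `CIM_G` is a
simplex of dimension `2^{p−2} − 1`: there are exactly `2^{p−2}` Markov equivalence classes
of DAGs with skeleton `G` and their characteristic imsets are affinely independent. -/
theorem stmt15 (p : ℕ) (hp : 3 ≤ p)
    (V : Set (Finset (Fin p) → ℝ))
    (hV : V = {x | ∃ D : DAGraph p, D.skeleton = completeMinus p ∧ x = D.cim}) :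
    V.ncard = 2 ^ (p - 2) ∧
      AffineIndependent ℝ ((↑) : V → (Finset (Fin p) → ℝ)) := by
  have hVim : V = stmt15f p hp '' {C : Finset (Fin p) | C ⊆ stmt15R p} := by
    rw [hV]
    ext x
    constructor
    · rintro ⟨D, hsk, rfl⟩
      exact ⟨stmt15cset p hp D, stmt15cset_subset p hp D, (stmt15cim_eq p hp D hsk).symm⟩
    · rintro ⟨C, hC, rfl⟩
      refine ⟨stmt15D p C, stmt15D_skeleton p C, ?_⟩
      rw [stmt15cim_eq p hp (stmt15D p C) (stmt15D_skeleton p C), stmt15D_cset p hp C hC]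
  constructor
  · rw [hVim, Set.ncard_image_of_injOn (stmt15f_injOn p hp)]
    have hset : {C : Finset (Fin p) | C ⊆ stmt15R p} = ↑((stmt15R p).powerset) := by
      ext C
      simp [Finset.mem_powerset]
    rw [hset, Set.ncard_coe_finset, Finset.card_powerset, stmt15R_card p hp]
  · rw [affineIndependent_iff]
    intro s w hw0 hws
    have hmem : ∀ e : ↥V, ∃ C, C ⊆ stmt15R p ∧ (e : Finset (Fin p) → ℝ) = stmt15f p hp C := by
      intro e
      have he := (Set.ext_iff.mp hVim ↑e).mp e.2
      obtain ⟨C, hC, hfe⟩ := he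
      exact ⟨C, hC, hfe.symm⟩
    choose Cof hCofR hCofEq using hmem
    have hCofInj : ∀ e1 e2 : ↥V, Cof e1 = Cof e2 → e1 = e2 := by
      intro e1 e2 h
      apply Subtype.ext
      rw [hCofEq e1, hCofEq e2, h]
    -- key sum identity
    have hU : ∀ U : Finset (Fin p), U ⊆ stmt15R p →
        ∑ e ∈ s.filter (fun e => Cof e ⊆ U), w e = 0 := by
      intro U hUR
      set T : Finset (Fin p) := stmt15R p \ U with hT
      have hEval := congrFun hws (insert (stmt15v0 p hp) (insert (stmt15v1 p hp) T))
      simp only [Finset.sum_apply, Pi.zero_apply] at hEval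
      have hEval' : ∑ e ∈ s, w e * (if (T ∩ Cof e).Nonempty then 1 else 0) = 0 := by
        refine Eq.trans (Finset.sum_congr rfl fun e _ => ?_) hEval
        rw [Pi.smul_apply, smul_eq_mul, hCofEq e, stmt15f_eval p hp (Cof e) T (hCofR e)]
      have hsplit : ∑ e ∈ s.filter (fun e => (T ∩ Cof e).Nonempty), w e = 0 := by
        rw [← hEval']
        rw [Finset.sum_filter]
        apply Finset.sum_congr rfl
        intro e _
        by_cases h : (T ∩ Cof e).Nonempty <;> simp [h]
      have htotal := Finset.sum_filter_add_sum_filter_not s (fun e => (T ∩ Cof e).Nonempty) w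
      rw [hw0, hsplit, zero_add] at htotal
      rw [← htotal]
      apply Finset.sum_congr _ (fun _ _ => rfl)
      apply Finset.filter_congr
      intro e _
      simp only [Finset.not_nonempty_iff_eq_empty, eq_iff_iff]
      constructor
      · intro h
        ext x
        simp only [Finset.mem_inter, Finset.notMem_empty, iff_false, not_and]
        intro hxT hxC
        exact (Finset.mem_sdiff.1 hxT).2 (h hxC)
      · intro h x hx
        by_contra hxU
        have hxT : x ∈ T := Finset.mem_sdiff.2 ⟨hCofR e hx, hxU⟩
        have : x ∈ T ∩ Cof e := Finset.mem_inter.2 ⟨hxT, hx⟩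
        rw [h] at this
        exact absurd this (Finset.notMem_empty x)
    -- strong induction
    have main : ∀ U : Finset (Fin p), U ⊆ stmt15R p → ∀ e ∈ s, Cof e = U → w e = 0 := by
      intro U
      induction U using Finset.strongInduction with
      | _ U ih =>
        intro hUR e he hCe
        have hsum := hU U hUR
        have he' : e ∈ s.filter (fun x => Cof x ⊆ U) :=
          Finset.mem_filter.2 ⟨he, hCe ▸ Finset.Subset.refl _⟩
        rw [Finset.sum_eq_single_of_mem e he' ?_] at hsum
        · exact hsum
        · intro x hx hxe
          have hxs := Finset.mem_filter.1 hx
          have hCx : Cof x ⊂ U := by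
            refine lt_of_le_of_ne hxs.2 ?_
            intro hEq
            exact hxe (hCofInj x e (hEq.trans hCe.symm))
          exact ih (Cof x) hCx (fun y hy => hUR (hCx.subset hy)) x hxs.1 rfl
    intro e he
    exact main (Cof e) (hCofR e) e he rfl
end

section
/- Let G = K_p \ {1,2}. For every subset S ⊆ {3,...,p} there exists a DAG D_S with skeleton G whose set of v-structures is exactly {1 → i ← 2 : i ∈ S}. -/
open scoped Classical

/-- Let `G = K_p` minus the edge `{1,2}` (`p ≥ 3`). For every set `S` of
vertices other than `1` and `2` there is a DAG `D_S` with skeleton `G` whose v-structures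
are exactly `1 → i ← 2` for `i ∈ S`. -/
theorem stmt16 (p : ℕ) (hp : 3 ≤ p) (S : Finset (Fin p)) (hS : ∀ v ∈ S, 2 ≤ (v : ℕ)) :
    ∃ D : DAGraph p, D.skeleton = completeMinus p ∧
      ∀ a b c : Fin p, D.vStruct a b c ↔
        (b ∈ S ∧ (((a : ℕ) = 0 ∧ (c : ℕ) = 1) ∨ ((a : ℕ) = 1 ∧ (c : ℕ) = 0))) := by
  classical
  -- rank function: vertices 0,1 in the middle, S-vertices on top, others at bottom
  set f : Fin p → ℕ := fun v =>
    if (v : ℕ) ≤ 1 then p + (v : ℕ) else if v ∈ S then 2*p + (v : ℕ) else (v : ℕ) with hfdef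
  have hfval : ∀ v : Fin p, f v =
      if (v : ℕ) ≤ 1 then p + (v : ℕ) else if v ∈ S then 2*p + (v : ℕ) else (v : ℕ) :=
    fun v => rfl
  have hf0 : ∀ v : Fin p, (v : ℕ) = 0 → f v = p := by
    intro v hv; simp only [hfval]; rw [if_pos (by omega)]; omega
  have hf1 : ∀ v : Fin p, (v : ℕ) = 1 → f v = p + 1 := by
    intro v hv; simp only [hfval]; rw [if_pos (by omega)]; omega
  have hfS : ∀ v ∈ S, f v = 2*p + (v : ℕ) := by
    intro v hv
    have h2 := hS v hv
    simp only [hfval]; rw [if_neg (by omega), if_pos hv]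
  have hkey : ∀ b : Fin p, p + 1 < f b → b ∈ S := by
    intro b hb
    by_contra h
    have hblt := b.isLt
    have hfb : f b = if (b : ℕ) ≤ 1 then p + (b : ℕ) else (b : ℕ) := by
      simp [hfval, h]
    split_ifs at hfb <;> omega
  have hinj : ∀ a b : Fin p, f a = f b → a = b := by
    intro a b hab
    have ha := a.isLt; have hb := b.isLt
    by_contra hne
    have hne' : (a : ℕ) ≠ (b : ℕ) := fun h => hne (Fin.ext h)
    simp only [hfval] at hab
    split_ifs at hab <;> omega
  set E : Fin p → Fin p → Prop := fun a b =>
    (¬(((a : ℕ) = 0 ∧ (b : ℕ) = 1) ∨ ((a : ℕ) = 1 ∧ (b : ℕ) = 0))) ∧ f a < f b with hEdef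
  have hacyc : ∀ i, ¬ Relation.TransGen E i i := by
    intro i h
    have ht : Transitive (fun a b : Fin p => f a < f b) := fun a b c => Nat.lt_trans
    have : Relation.TransGen (fun a b : Fin p => f a < f b) i i :=
      Relation.TransGen.mono (fun a b hab => hab.2) _ _ h
    haveI hti : IsTrans (Fin p) (fun a b : Fin p => f a < f b) := ⟨fun a b c => @ht a b c⟩
    rw [Relation.transGen_eq_self] at this
    exact lt_irrefl _ this
  refine ⟨⟨E, hacyc⟩, ?_, ?_⟩
  · ext a b
    show E a b ∨ E b a ↔ _
    simp only [completeMinus]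
    constructor
    · rintro (⟨hnp, hlt⟩ | ⟨hnp, hlt⟩)
      · exact ⟨fun h => by rw [h] at hlt; exact lt_irrefl _ hlt, hnp⟩
      · exact ⟨fun h => by rw [h] at hlt; exact lt_irrefl _ hlt, by tauto⟩
    · rintro ⟨hne, hnp⟩
      have : f a ≠ f b := fun h => hne (hinj a b h)
      rcases lt_or_gt_of_ne this with h | h
      · exact Or.inl ⟨hnp, h⟩
      · exact Or.inr ⟨by tauto, h⟩
  · intro a b c
    constructor
    · rintro ⟨hac, ⟨hnp1, h1⟩, ⟨hnp2, h2⟩, hnadj⟩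
      have hpair : (((a : ℕ) = 0 ∧ (c : ℕ) = 1) ∨ ((a : ℕ) = 1 ∧ (c : ℕ) = 0)) := by
        by_contra hnp
        have hfne : f a ≠ f c := fun h => hac (hinj a c h)
        rcases lt_or_gt_of_ne hfne with h | h
        · exact hnadj (Or.inl ⟨hnp, h⟩)
        · exact hnadj (Or.inr ⟨by tauto, h⟩)
      refine ⟨?_, hpair⟩
      rcases hpair with ⟨ha0, hc1⟩ | ⟨ha1, hc0⟩
      · have := hf1 c hc1
        exact hkey b (by omega)
      · have := hf1 a ha1
        exact hkey b (by omega)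
    · rintro ⟨hbS, hpair⟩
      have hb2 := hS b hbS
      have hfb := hfS b hbS
      have hane : a ≠ c := by
        intro h
        rw [h] at hpair; omega
      refine ⟨hane, ⟨by omega, ?_⟩, ⟨by omega, ?_⟩, ?_⟩
      · rcases hpair with ⟨ha0, _⟩ | ⟨ha1, _⟩
        · have := hf0 a ha0; omega
        · have := hf1 a ha1; omega
      · rcases hpair with ⟨_, hc1⟩ | ⟨_, hc0⟩
        · have := hf1 c hc1; omega
        · have := hf0 c hc0; omega
      · rintro (⟨hnp, _⟩ | ⟨hnp, _⟩)
        · exact hnp hpair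
        · exact hnp (by tauto)
end

section
/- Let {G, H} be a budding with respect to (i, j, S*) where the common skeleton G is a tree. Then pa_G(i) = S*, pa_G(j) = {i}, the graph G_{i←j} obtained by reversing the edge i → j in G is a DAG, and G_{i←j} is Markov equivalent to H. -/
open scoped Classical

/-- `{G, H}` is a *budding* with respect to `(i, j, S*)`. -/
noncomputable def Budding {p : ℕ} (G H : DAGraph p) (i j : Fin p)
    (Sstar : Finset (Fin p)) : Prop :=
  i ≠ j ∧ i ∉ Sstar ∧ j ∉ Sstar ∧ 2 ≤ Sstar.card ∧
  G.cim {i, j} = 1 ∧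
  (∀ S ⊆ Sstar, S.Nonempty → G.cim (insert i S) = 1) ∧
  ¬ (∀ s ∈ Sstar, G.skeleton.Adj s j) ∧
  ∀ T : Finset (Fin p), H.cim T = G.cim T +
    (if ∃ S ⊆ Sstar, ¬ (∀ s ∈ S, G.skeleton.Adj s j) ∧ T = S ∪ {i, j} then 1 else 0)

/- ## Auxiliary lemmas -/

private lemma dag_noSelf {p : ℕ} (G : DAGraph p) (a : Fin p) : ¬ G.E a a :=
  fun h => G.acyclic a (Relation.TransGen.single h)

private lemma dag_noTwo {p : ℕ} (G : DAGraph p) {a b : Fin p}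
    (h : G.E a b) (h' : G.E b a) : False :=
  G.acyclic a ((Relation.TransGen.single h).tail h')

private lemma imsetRel_eq_one_iff {p : ℕ} (E : Fin p → Fin p → Prop) (S : Finset (Fin p)) :
    imsetRel E S = 1 ↔ ∃ v ∈ S, ∀ u ∈ S, u ≠ v → E u v := by
  unfold imsetRel; split
  · next h => exact ⟨fun _ => h, fun _ => rfl⟩
  · next h => exact ⟨fun heq => absurd heq (by norm_num), fun hh => absurd hh h⟩

private lemma imsetRel_cases {p : ℕ} (E : Fin p → Fin p → Prop) (S : Finset (Fin p)) :
    imsetRel E S = 0 ∨ imsetRel E S = 1 := by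
  unfold imsetRel; split
  · exact Or.inr rfl
  · exact Or.inl rfl

private lemma no_triangle {p : ℕ} {Γ : SimpleGraph (Fin p)} (h : Γ.IsAcyclic)
    {a b c : Fin p} (hab : Γ.Adj a b) (hbc : Γ.Adj b c) (hac : Γ.Adj a c) : False := by
  have hb : a ∉ (SimpleGraph.Path.singleton hbc : Γ.Walk b c).support := by
    simp [SimpleGraph.Path.singleton, hab.ne, hac.ne]
  have heq := SimpleGraph.isAcyclic_iff_path_unique.mp h (SimpleGraph.Path.singleton hac)
    ⟨SimpleGraph.Walk.cons hab (SimpleGraph.Path.singleton hbc),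
      (SimpleGraph.Path.singleton hbc).2.cons hb⟩
  have hl := congrArg (fun q : Γ.Path a c => (q : Γ.Walk a c).length) heq
  simp [SimpleGraph.Path.singleton] at hl

private lemma chain_walk {p : ℕ} {Γ : SimpleGraph (Fin p)} (E : Fin p → Fin p → Prop)
    (hsub : ∀ a b, E a b → Γ.Adj a b) {a b : Fin p} (h : Relation.ReflTransGen E a b) :
    ∃ w : Γ.Walk a b, ∀ e ∈ w.edges, ∃ x y, E x y ∧ e = s(x, y) := by
  induction h with
  | refl => exact ⟨SimpleGraph.Walk.nil, by simp⟩
  | tail hbc hcd ih =>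
      obtain ⟨w, hw⟩ := ih
      refine ⟨w.concat (hsub _ _ hcd), ?_⟩
      intro e he
      rw [SimpleGraph.Walk.edges_concat, List.concat_eq_append, List.mem_append] at he
      rcases he with h1 | h2
      · exact hw e h1
      · exact ⟨_, _, hcd, by simpa using h2⟩

private lemma revDecomp {p : ℕ} (E : Fin p → Fin p → Prop) (i j a b : Fin p)
    (h : Relation.TransGen (reverseRel E i j) a b) :
    Relation.TransGen (fun x y => E x y ∧ ¬(x = i ∧ y = j)) a b ∨
      (Relation.ReflTransGen (fun x y => E x y ∧ ¬(x = i ∧ y = j)) a j ∧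
       Relation.ReflTransGen (fun x y => E x y ∧ ¬(x = i ∧ y = j)) i b) := by
  induction h with
  | single h =>
      rcases h with h | ⟨rfl, rfl⟩
      · exact Or.inl (Relation.TransGen.single h)
      · exact Or.inr ⟨Relation.ReflTransGen.refl, Relation.ReflTransGen.refl⟩
  | tail hab hbc ih =>
      rcases hbc with hbc | ⟨rfl, rfl⟩
      · rcases ih with h1 | ⟨h1, h2⟩
        · exact Or.inl (h1.tail hbc)
        · exact Or.inr ⟨h1, h2.tail hbc⟩
      · rcases ih with h1 | ⟨h1, h2⟩
        · exact Or.inr ⟨h1.to_reflTransGen, Relation.ReflTransGen.refl⟩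
        · exact Or.inr ⟨h1, Relation.ReflTransGen.refl⟩

/-- If `{G, H}` is a budding with respect to `(i, j, S*)` and the common
skeleton is a tree, then `pa_G(i) = S*`, `pa_G(j) = {i}`, reversing the edge `i → j` in `G`
yields a DAG, and that DAG is Markov equivalent to `H`. -/

theorem stmt17 {p : ℕ} (G H : DAGraph p) (i j : Fin p) (Sstar : Finset (Fin p))
    (hsk : G.skeleton = H.skeleton) (htree : G.skeleton.IsTree)
    (hbud : Budding G H i j Sstar) :
    G.E i j ∧
    {k | G.E k i} = (Sstar : Set (Fin p)) ∧
    {k | G.E k j} = {i} ∧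
    (∀ a, ¬ Relation.TransGen (reverseRel G.E i j) a a) ∧
    (∀ T : Finset (Fin p), imsetRel (reverseRel G.E i j) T = H.cim T) := by
  obtain ⟨hij, hiS, hjS, hcard, hcij, hcins, hnadjall, hH⟩ := hbud
  have hac := htree.2
  have hacH : H.skeleton.IsAcyclic := hsk ▸ hac
  -- singleton condition : every s ∈ S* is adjacent to i
  have hadj1 : ∀ s ∈ Sstar, G.E s i ∨ G.E i s := by
    intro s hs
    have hsi : s ≠ i := fun h => hiS (h ▸ hs)
    have h1 := hcins {s} (Finset.singleton_subset_iff.mpr hs) ⟨s, Finset.mem_singleton_self s⟩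
    obtain ⟨v, hv, hsink⟩ := (imsetRel_eq_one_iff G.E (insert i {s})).mp h1
    rcases Finset.mem_insert.mp hv with rfl | hv'
    · exact Or.inl (hsink s (by simp) hsi)
    · have hv2 : v = s := by simpa using hv'
      subst hv2
      exact Or.inr (hsink i (by simp) hsi.symm)
  have hadjIs : ∀ s ∈ Sstar, G.skeleton.Adj i s := fun s hs => (hadj1 s hs).elim Or.inr Or.inl
  -- F2 : every s ∈ S* is a parent of i
  have hSi : ∀ s ∈ Sstar, G.E s i := by
    intro s hs
    obtain ⟨t, ht, hts⟩ := Finset.exists_mem_ne (lt_of_lt_of_le one_lt_two hcard) s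
    have hsi : s ≠ i := fun h => hiS (h ▸ hs)
    have hst : s ≠ t := hts.symm
    have hsub : {s, t} ⊆ Sstar := by
      intro x hx; rcases Finset.mem_insert.mp hx with rfl | hx'
      · exact hs
      · exact (Finset.mem_singleton.mp hx') ▸ ht
    have h1 := hcins {s, t} hsub ⟨s, by simp⟩
    obtain ⟨v, hv, hsink⟩ := (imsetRel_eq_one_iff G.E (insert i {s, t})).mp h1
    rcases Finset.mem_insert.mp hv with rfl | hv'
    · exact hsink s (by simp) hsi
    · rcases Finset.mem_insert.mp hv' with rfl | hv''
      · -- sink at s : triangle i s t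
        exfalso
        have h2 : G.E t v := hsink t (by simp) hts
        exact no_triangle hac (hadjIs v hs) (Or.inr h2) (hadjIs t ht)
      · have hv3 : v = t := Finset.mem_singleton.mp hv''
        subst hv3
        exfalso
        have h2 : G.E s v := hsink s (by simp) hst
        exact no_triangle hac (hadjIs s hs) (Or.inl h2) (hadjIs v ht)
  -- F1 : the edge between i and j
  have hE1 : G.E i j ∨ G.E j i := by
    obtain ⟨v, hv, hsink⟩ := (imsetRel_eq_one_iff G.E {i, j}).mp hcij
    rcases Finset.mem_insert.mp hv with rfl | hv'
    · exact Or.inr (hsink j (by simp) (Ne.symm hij))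
    · have hv2 : v = j := Finset.mem_singleton.mp hv'
      subst hv2
      exact Or.inl (hsink i (by simp) hij)
  -- a witness s₀ ∈ S* not adjacent to j
  have hex0 : ∃ s ∈ Sstar, ¬ G.skeleton.Adj s j := by
    push_neg at hnadjall; exact hnadjall
  obtain ⟨s₀, hs₀S, hs₀na⟩ := hex0
  have hs₀i : s₀ ≠ i := fun h => hiS (h ▸ hs₀S)
  have hs₀j : s₀ ≠ j := fun h => hjS (h ▸ hs₀S)
  -- F3 : G.E i j
  have hEij : G.E i j := by
    rcases hE1 with h | h
    · exact h
    · exfalso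
      have hind : ∃ S ⊆ Sstar, ¬ (∀ s ∈ S, G.skeleton.Adj s j) ∧
          ({s₀, i, j} : Finset (Fin p)) = S ∪ {i, j} := by
        refine ⟨{s₀}, Finset.singleton_subset_iff.mpr hs₀S, by simpa using hs₀na, ?_⟩
        ext x; simp [Finset.mem_insert, Finset.mem_union]; tauto
      have hHT := hH {s₀, i, j}
      rw [if_pos hind] at hHT
      have hG1 : G.cim {s₀, i, j} = 1 := by
        refine (imsetRel_eq_one_iff G.E _).mpr ⟨i, by simp, ?_⟩
        intro u hu hne
        rcases Finset.mem_insert.mp hu with rfl | hu'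
        · exact hSi u hs₀S
        · rcases Finset.mem_insert.mp hu' with rfl | hu''
          · exact absurd rfl hne
          · exact (Finset.mem_singleton.mp hu'') ▸ h
      rw [hG1] at hHT
      rcases imsetRel_cases H.E {s₀, i, j} with h0 | h1
      · rw [show H.cim {s₀, i, j} = imsetRel H.E {s₀, i, j} from rfl, h0] at hHT; linarith
      · rw [show H.cim {s₀, i, j} = imsetRel H.E {s₀, i, j} from rfl, h1] at hHT; linarith
  have hadjij : G.skeleton.Adj i j := Or.inl hEij
  -- F4 : no element of S* is adjacent to j
  have hnadjS : ∀ s ∈ Sstar, ¬ G.skeleton.Adj s j := by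
    intro s hs hadj
    exact no_triangle hac ((hadjIs s hs).symm) hadjij hadj
  -- skeleton adjacency transfer
  have hskAdj : ∀ a b, H.E a b → G.skeleton.Adj a b := by
    intro a b h; rw [hsk]; exact Or.inl h
  -- F5 : in H, all of S* ∪ {j} are parents of i
  have hHiT : ∀ T : Finset (Fin p),
      (∃ S ⊆ Sstar, ¬ (∀ s ∈ S, G.skeleton.Adj s j) ∧ T = S ∪ {i, j}) →
      G.cim T = 0 ∧ H.cim T = 1 := by
    intro T hind
    have hHT := hH T
    rw [if_pos hind] at hHT
    rcases imsetRel_cases G.E T with hg | hg <;>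
      rcases imsetRel_cases H.E T with hh | hh <;>
      rw [show G.cim T = imsetRel G.E T from rfl, hg] at hHT ⊢ <;>
      rw [show H.cim T = imsetRel H.E T from rfl, hh] at hHT ⊢ <;>
      first
        | exact ⟨rfl, rfl⟩
        | linarith
  have hstar : G.cim (Sstar ∪ {i, j}) = 0 ∧ H.cim (Sstar ∪ {i, j}) = 1 :=
    hHiT _ ⟨Sstar, Finset.Subset.refl _, hnadjall, rfl⟩
  have hHsinki : (∀ s ∈ Sstar, H.E s i) ∧ H.E j i := by
    obtain ⟨v, hv, hsink⟩ := (imsetRel_eq_one_iff H.E _).mp hstar.2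
    rcases Finset.mem_union.mp hv with hvS | hvij
    · exfalso
      obtain ⟨t, ht, hts⟩ :=
        Finset.exists_mem_ne (lt_of_lt_of_le one_lt_two hcard) v
      have h2 : H.E t v := hsink t (Finset.mem_union_left _ ht) hts
      exact no_triangle hac (hadjIs v hvS) ((hskAdj t v h2).symm) (hadjIs t ht)
    · rcases Finset.mem_insert.mp hvij with rfl | hvj
      · constructor
        · intro s hs
          exact hsink s (Finset.mem_union_left _ hs) (fun h => hiS (h ▸ hs))
        · exact hsink j (Finset.mem_union_right _ (by simp)) (Ne.symm hij)
      · exfalso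
        have hv2 : v = j := Finset.mem_singleton.mp hvj
        subst hv2
        have h2 : H.E s₀ v := hsink s₀ (Finset.mem_union_left _ hs₀S) hs₀j
        exact hs₀na (hskAdj _ _ h2)
  have hHsi : ∀ s ∈ Sstar, H.E s i := hHsinki.1
  have hHji : H.E j i := hHsinki.2
  -- helper: sets {k, i, j} with k ∉ Sstar ∪ {i,j} avoid the indicator
  have hind0 : ∀ k : Fin p, k ∉ Sstar → k ≠ i → k ≠ j →
      ¬ (∃ S ⊆ Sstar, ¬ (∀ s ∈ S, G.skeleton.Adj s j) ∧
        ({k, i, j} : Finset (Fin p)) = S ∪ {i, j}) := by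
    rintro k hkS hki hkj ⟨S, hSsub, _, hTeq⟩
    have hk : k ∈ S ∪ ({i, j} : Finset (Fin p)) := by
      rw [← hTeq]; simp
    rcases Finset.mem_union.mp hk with h | h
    · exact hkS (hSsub h)
    · rcases Finset.mem_insert.mp h with h' | h'
      · exact hki h'
      · exact hkj (Finset.mem_singleton.mp h')
  -- F6 : parents of i in G are exactly S*
  have hpai : ∀ k, G.E k i → k ∈ Sstar := by
    intro k hk
    by_contra hkS
    have hki : k ≠ i := fun h => dag_noSelf G i (h ▸ hk)
    have hkj : k ≠ j := fun h => dag_noTwo G hEij (h ▸ hk)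
    have hs₀k : s₀ ≠ k := fun h => hkS (h ▸ hs₀S)
    have hadjki : G.skeleton.Adj k i := Or.inl hk
    have hnadjks : ¬ G.skeleton.Adj k s₀ := fun h =>
      no_triangle hac hadjki.symm h (hadjIs s₀ hs₀S)
    have hnadjkj : ¬ G.skeleton.Adj k j := fun h =>
      no_triangle hac hadjki.symm h hadjij
    -- T₁ = {k, s₀, i}
    have hG1 : G.cim {k, s₀, i} = 1 := by
      refine (imsetRel_eq_one_iff G.E _).mpr ⟨i, by simp, ?_⟩
      intro u hu hne
      rcases Finset.mem_insert.mp hu with rfl | hu'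
      · exact hk
      · rcases Finset.mem_insert.mp hu' with rfl | hu''
        · exact hSi u hs₀S
        · exact absurd (Finset.mem_singleton.mp hu'') hne
    have hind1 : ¬ (∃ S ⊆ Sstar, ¬ (∀ s ∈ S, G.skeleton.Adj s j) ∧
        ({k, s₀, i} : Finset (Fin p)) = S ∪ {i, j}) := by
      rintro ⟨S, hSsub, _, hTeq⟩
      have hjmem : j ∈ ({k, s₀, i} : Finset (Fin p)) := by
        rw [hTeq]; simp
      rcases Finset.mem_insert.mp hjmem with h | h
      · exact hkj h.symm
      · rcases Finset.mem_insert.mp h with h' | h'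
        · exact hs₀j h'.symm
        · exact hij (Finset.mem_singleton.mp h').symm
    have hHT1 := hH {k, s₀, i}
    rw [if_neg hind1, add_zero, hG1] at hHT1
    -- so H has a sink in {k, s₀, i}; it must be i, giving H.E k i
    obtain ⟨v, hv, hsink⟩ := (imsetRel_eq_one_iff H.E _).mp hHT1
    have hHki : H.E k i := by
      rcases Finset.mem_insert.mp hv with rfl | hv'
      · exfalso
        exact hnadjks (hskAdj s₀ v (hsink s₀ (by simp) hs₀k) ).symm
      · rcases Finset.mem_insert.mp hv' with rfl | hv''
        · exfalso
          exact hnadjks (hskAdj k v (hsink k (by simp) (fun h => hs₀k h.symm)))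
        · have hv3 : v = i := Finset.mem_singleton.mp hv''
          subst hv3
          exact hsink k (by simp) hki
    -- T₂ = {k, i, j}
    have hG2 : G.cim {k, i, j} = 0 := by
      rcases imsetRel_cases G.E {k, i, j} with h0 | h1
      · exact h0
      · exfalso
        obtain ⟨v, hv, hsink⟩ := (imsetRel_eq_one_iff G.E _).mp h1
        rcases Finset.mem_insert.mp hv with rfl | hv'
        · exact dag_noTwo G hk (hsink i (by simp) (fun h => hki h.symm))
        · rcases Finset.mem_insert.mp hv' with rfl | hv''
          · exact dag_noTwo G hEij (hsink j (by simp) (Ne.symm hij))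
          · have hv3 : v = j := Finset.mem_singleton.mp hv''
            subst hv3
            exact hnadjkj (Or.inl (hsink k (by simp) hkj))
    have hHT2 := hH {k, i, j}
    rw [if_neg (hind0 k hkS hki hkj), add_zero, hG2] at hHT2
    have hH2 : H.cim {k, i, j} = 1 := by
      refine (imsetRel_eq_one_iff H.E _).mpr ⟨i, by simp, ?_⟩
      intro u hu hne
      rcases Finset.mem_insert.mp hu with rfl | hu'
      · exact hHki
      · rcases Finset.mem_insert.mp hu' with rfl | hu''
        · exact absurd rfl hne
        · exact (Finset.mem_singleton.mp hu'') ▸ hHji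
    rw [hH2] at hHT2
    linarith
  -- F7 : the only parent of j in G is i
  have hpaj : ∀ k, G.E k j → k = i := by
    intro k hk
    by_contra hki
    have hkj : k ≠ j := fun h => dag_noSelf G j (h ▸ hk)
    have hkS : k ∉ Sstar := fun h => hnadjS k h (Or.inl hk)
    have hnadjki : ¬ G.skeleton.Adj k i := fun h =>
      no_triangle hac h hadjij (Or.inl hk)
    have hG1 : G.cim {k, i, j} = 1 := by
      refine (imsetRel_eq_one_iff G.E _).mpr ⟨j, by simp, ?_⟩
      intro u hu hne
      rcases Finset.mem_insert.mp hu with rfl | hu'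
      · exact hk
      · rcases Finset.mem_insert.mp hu' with rfl | hu''
        · exact hEij
        · exact absurd (Finset.mem_singleton.mp hu'') hne
    have hHT := hH {k, i, j}
    rw [if_neg (hind0 k hkS hki hkj), add_zero, hG1] at hHT
    obtain ⟨v, hv, hsink⟩ := (imsetRel_eq_one_iff H.E _).mp hHT
    rcases Finset.mem_insert.mp hv with rfl | hv'
    · exact hnadjki ((hskAdj i v (hsink i (by simp) (fun h => hki h.symm))).symm)
    · rcases Finset.mem_insert.mp hv' with rfl | hv''
      · exact hnadjki (hskAdj k v (hsink k (by simp) hki))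
      · have hv3 : v = j := Finset.mem_singleton.mp hv''
        subst hv3
        exact dag_noTwo H (hsink i (by simp) hij) hHji
  -- part 4 : acyclicity of the reversed graph
  have hrev : ∀ a, ¬ Relation.TransGen (reverseRel G.E i j) a a := by
    intro a ha
    rcases revDecomp G.E i j a a ha with h | ⟨h1, h2⟩
    · exact G.acyclic a (Relation.TransGen.mono (fun x y hxy => hxy.1) _ _ h)
    · have hijRT : Relation.ReflTransGen (fun x y => G.E x y ∧ ¬(x = i ∧ y = j)) i j :=
        h2.trans h1
      obtain ⟨w, hw⟩ := chain_walk (Γ := G.skeleton) (fun x y => G.E x y ∧ ¬(x = i ∧ y = j))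
        (fun x y hxy => show G.skeleton.Adj x y from Or.inl hxy.1) hijRT
      have hq := SimpleGraph.isAcyclic_iff_path_unique.mp hac w.toPath
        (SimpleGraph.Path.singleton hadjij)
      have hmem : s(i, j) ∈ (w.toPath : G.skeleton.Walk i j).edges := by
        rw [hq]; simp [SimpleGraph.Path.singleton]
      obtain ⟨x, y, hxy, he⟩ := hw _ (w.edges_toPath_subset hmem)
      rw [Sym2.eq_iff] at he
      rcases he with ⟨hx, hy⟩ | ⟨hx, hy⟩
      · exact hxy.2 ⟨hx.symm, hy.symm⟩
      · exact dag_noTwo G hEij (hx ▸ hy ▸ hxy.1)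
  refine ⟨hEij, ?_, ?_, hrev, ?_⟩
  · ext k
    simp only [Set.mem_setOf_eq, Finset.coe_sort_coe, Finset.mem_coe]
    exact ⟨hpai k, fun hk => hSi k hk⟩
  · ext k
    simp only [Set.mem_setOf_eq, Set.mem_singleton_iff]
    exact ⟨hpaj k, fun hk => hk ▸ hEij⟩
  -- part 5 : the imset identity
  · intro T
    rw [hH T]
    by_cases hP : ∃ S ⊆ Sstar, ¬ (∀ s ∈ S, G.skeleton.Adj s j) ∧ T = S ∪ {i, j}
    · rw [if_pos hP]
      obtain ⟨S, hSsub, hSne, rfl⟩ := hP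
      push_neg at hSne
      obtain ⟨s, hsS, -⟩ := hSne
      have hsS' : s ∈ Sstar := hSsub hsS
      have hsi : s ≠ i := fun h => hiS (h ▸ hsS')
      have hsj : s ≠ j := fun h => hjS (h ▸ hsS')
      have hiT : i ∈ S ∪ ({i, j} : Finset (Fin p)) := Finset.mem_union_right _ (by simp)
      have hG0 : G.cim (S ∪ {i, j}) = 0 := by
        rcases imsetRel_cases G.E (S ∪ {i, j}) with h0 | h1
        · exact h0
        · exfalso
          obtain ⟨v, hv, hsink⟩ := (imsetRel_eq_one_iff G.E _).mp h1
          rcases Finset.mem_union.mp hv with hvS | hvij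
          · have hvi : v ≠ i := fun h => hiS (h ▸ hSsub hvS)
            exact dag_noTwo G (hSi v (hSsub hvS)) (hsink i hiT (Ne.symm hvi))
          · rcases Finset.mem_insert.mp hvij with rfl | hvj
            · exact dag_noTwo G hEij
                (hsink j (Finset.mem_union_right _ (by simp)) (Ne.symm hij))
            · have hv2 : v = j := Finset.mem_singleton.mp hvj
              subst hv2
              exact hnadjS s hsS' (Or.inl (hsink s (Finset.mem_union_left _ hsS) hsj))
      have hL : imsetRel (reverseRel G.E i j) (S ∪ {i, j}) = 1 := by
        refine (imsetRel_eq_one_iff _ _).mpr ⟨i, hiT, ?_⟩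
        intro u hu hne
        rcases Finset.mem_union.mp hu with huS | huij
        · exact Or.inl ⟨hSi u (hSsub huS), fun h => hij h.2⟩
        · rcases Finset.mem_insert.mp huij with rfl | huj
          · exact absurd rfl hne
          · exact Or.inr ⟨Finset.mem_singleton.mp huj, rfl⟩
      rw [hL, hG0]; norm_num
    · rw [if_neg hP, add_zero]
      show imsetRel (reverseRel G.E i j) T = imsetRel G.E T
      have hiff : (∃ v ∈ T, ∀ u ∈ T, u ≠ v → reverseRel G.E i j u v) ↔
          (∃ v ∈ T, ∀ u ∈ T, u ≠ v → G.E u v) := by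
        constructor
        · rintro ⟨v, hv, hsink⟩
          by_cases hvi : i = v
          · subst hvi
            have hsub : ∀ u ∈ T, u = i ∨ u = j ∨ u ∈ Sstar := by
              intro u hu
              by_cases hu' : u = i
              · exact Or.inl hu'
              · rcases hsink u hu hu' with ⟨he, -⟩ | ⟨huj, -⟩
                · exact Or.inr (Or.inr (hpai u he))
                · exact Or.inr (Or.inl huj)
            by_cases hjT : j ∈ T
            · by_cases hexs : ∃ s ∈ T, s ≠ i ∧ s ≠ j
              · exfalso
                apply hP
                refine ⟨T \ {i, j}, ?_, ?_, ?_⟩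
                · intro x hx
                  obtain ⟨hxT, hx2⟩ := Finset.mem_sdiff.mp hx
                  rcases hsub x hxT with h | h | h
                  · exact absurd (by simp [h]) hx2
                  · exact absurd (by simp [h]) hx2
                  · exact h
                · obtain ⟨s, hsT, hsv, hsj⟩ := hexs
                  intro hall
                  have hsmem : s ∈ T \ ({i, j} : Finset (Fin p)) :=
                    Finset.mem_sdiff.mpr ⟨hsT, by simp [hsv, hsj]⟩
                  have hsS2 : s ∈ Sstar := by
                    rcases hsub s hsT with h | h | h
                    · exact absurd h hsv
                    · exact absurd h hsj
                    · exact h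
                  exact hnadjS s hsS2 (hall s hsmem)
                · ext x
                  simp only [Finset.mem_union, Finset.mem_sdiff, Finset.mem_insert,
                    Finset.mem_singleton]
                  constructor
                  · intro hx
                    by_cases hxv : x = i
                    · exact Or.inr (Or.inl hxv)
                    · by_cases hxj : x = j
                      · exact Or.inr (Or.inr hxj)
                      · exact Or.inl ⟨hx, by tauto⟩
                  · rintro (⟨hx, -⟩ | h | h)
                    · exact hx
                    · exact h ▸ hv
                    · exact h ▸ hjT
              · push_neg at hexs
                refine ⟨j, hjT, ?_⟩
                intro u hu hne
                have huv : u = i := by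
                  by_contra h
                  exact hne (hexs u hu h)
                exact huv ▸ hEij
            · refine ⟨i, hv, ?_⟩
              intro u hu hne
              rcases hsub u hu with h | h | h
              · exact absurd h hne
              · exact absurd (h ▸ hu) hjT
              · exact hSi u h
          · by_cases hvj : j = v
            · subst hvj
              refine ⟨j, hv, ?_⟩
              intro u hu hne
              exfalso
              rcases hsink u hu hne with ⟨he, hni⟩ | ⟨-, hji⟩
              · exact hni ⟨hpaj u he, rfl⟩
              · exact hij hji.symm
            · refine ⟨v, hv, ?_⟩
              intro u hu hne
              rcases hsink u hu hne with ⟨he, -⟩ | ⟨-, hvi'⟩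
              · exact he
              · exact absurd hvi'.symm hvi
        · rintro ⟨v, hv, hsink⟩
          by_cases hvi : i = v
          · subst hvi
            refine ⟨i, hv, ?_⟩
            intro u hu hne
            exact Or.inl ⟨hsink u hu hne, fun h => hij h.2⟩
          · by_cases hvj : j = v
            · subst hvj
              by_cases hiT : i ∈ T
              · refine ⟨i, hiT, ?_⟩
                intro u hu hne
                have huv : u = j := by
                  by_contra huv
                  exact hne (hpaj u (hsink u hu huv))
                exact Or.inr ⟨huv, rfl⟩
              · refine ⟨j, hv, ?_⟩
                intro u hu hne
                exact absurd ((hpaj u (hsink u hu hne)) ▸ hu) hiT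
            · refine ⟨v, hv, ?_⟩
              intro u hu hne
              exact Or.inl ⟨hsink u hu hne, fun h => hvj h.2.symm⟩
      show imsetRel (reverseRel G.E i j) T = imsetRel G.E T
      unfold imsetRel
      exact if_congr hiff rfl rfl
end

section
/- For any two DAGs G and H on [p] with the same skeleton, there exists a finite sequence of DAGs G = G₀, G₁, ..., G_{m+1} = H, all with the same skeleton, such that each consecutive pair {G_k, G_{k+1}} is either a pair of Markov equivalent DAGs or differs by the reversal of a single edge (i.e., G_{k+1} = (G_k)_{i←j} for some edge i → j of G_k whose reversal preserves acyclicity). -/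
open scoped Classical

namespace Stmt19

open Relation

variable {p : ℕ}

noncomputable def lvl (E : Fin p → Fin p → Prop) (a : Fin p) : ℕ :=
  (Finset.univ.filter (fun x => TransGen E x a)).card

lemma lvl_lt {G : DAGraph p} {a b : Fin p} (h : G.E a b) : lvl G.E a < lvl G.E b := by
  apply Finset.card_lt_card
  constructor
  · intro x hx
    simp only [Finset.mem_filter, Finset.mem_univ, true_and] at *
    exact hx.tail h
  · intro hsub
    have ha : a ∈ Finset.univ.filter (fun x => TransGen G.E x b) := by
      simp only [Finset.mem_filter, Finset.mem_univ, true_and]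
      exact TransGen.single h
    have := hsub ha
    simp only [Finset.mem_filter, Finset.mem_univ, true_and] at this
    exact G.acyclic a this

lemma lvl_lt_trans {G : DAGraph p} {a b : Fin p} (h : TransGen G.E a b) :
    lvl G.E a < lvl G.E b := by
  induction h with
  | single h => exact lvl_lt h
  | tail _ h ih => exact ih.trans (lvl_lt h)

lemma lvl_le_rtg {G : DAGraph p} {a b : Fin p} (h : ReflTransGen G.E a b) :
    lvl G.E a ≤ lvl G.E b := by
  rcases h.cases_head with rfl | ⟨c, hac, hcb⟩
  · exact le_refl _
  · exact (lvl_lt_trans (TransGen.head' hac hcb)).le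

/-- Decomposition of paths in the reversed graph. -/
lemma rev_decomp {E : Fin p → Fin p → Prop} {i j a b : Fin p}
    (h : TransGen (reverseRel E i j) a b) :
    TransGen (fun a b => E a b ∧ ¬(a = i ∧ b = j)) a b ∨
      (ReflTransGen (fun a b => E a b ∧ ¬(a = i ∧ b = j)) a j ∧
       ReflTransGen (fun a b => E a b ∧ ¬(a = i ∧ b = j)) i b) := by
  set E' := fun a b => E a b ∧ ¬(a = i ∧ b = j) with hE'
  induction h with
  | single h =>
    rcases h with h | ⟨rfl, rfl⟩
    · exact Or.inl (TransGen.single h)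
    · exact Or.inr ⟨ReflTransGen.refl, ReflTransGen.refl⟩
  | tail _ h ih =>
    rename_i b c hab
    rcases ih with ht | ⟨h1, h2⟩
    · rcases h with h | ⟨rfl, rfl⟩
      · exact Or.inl (ht.tail h)
      · exact Or.inr ⟨ht.to_reflTransGen, ReflTransGen.refl⟩
    · rcases h with h | ⟨rfl, rfl⟩
      · exact Or.inr ⟨h1, h2.tail h⟩
      · exact Or.inr ⟨h1, ReflTransGen.refl⟩

/-- Along any path, either every edge agrees with `F`, or some edge disagrees. -/
lemma path_split {E F : Fin p → Fin p → Prop} {c d : Fin p}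
    (h : ReflTransGen E c d) :
    ReflTransGen F c d ∨
      ∃ u v, E u v ∧ ¬ F u v ∧ ReflTransGen E c u ∧ ReflTransGen E v d := by
  induction h with
  | refl => exact Or.inl ReflTransGen.refl
  | tail hcd hde ih =>
    rename_i d' e
    rcases ih with hF | ⟨u, v, h1, h2, h3, h4⟩
    · by_cases hf : F d' e
      · exact Or.inl (hF.tail hf)
      · exact Or.inr ⟨d', e, hde, hf, hcd, ReflTransGen.refl⟩
    · exact Or.inr ⟨u, v, h1, h2, h3, h4.tail hde⟩

lemma skel_adj {G : DAGraph p} {a b : Fin p} (h : G.skeleton.Adj a b) : G.E a b ∨ G.E b a := h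

lemma not_both {G : DAGraph p} {a b : Fin p} (h1 : G.E a b) (h2 : G.E b a) : False :=
  G.acyclic a ((TransGen.single h1).tail h2)

lemma rev_acyclic (G H : DAGraph p) (hsk : G.skeleton = H.skeleton) {i j : Fin p}
    (hij : G.E i j) (hji : H.E j i)
    (hmin : ∀ u v, G.E u v → H.E v u →
      lvl G.E j - lvl G.E i ≤ lvl G.E v - lvl G.E u) :
    ∀ a, ¬ TransGen (reverseRel G.E i j) a a := by
  intro a ha
  have hadj : ∀ u v : Fin p, G.E u v → H.E u v ∨ H.E v u := by
    intro u v h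
    have : H.skeleton.Adj u v := hsk ▸ (Or.inl h : G.skeleton.Adj u v)
    exact this
  rcases rev_decomp ha with ht | ⟨h1, h2⟩
  · exact G.acyclic a (TransGen.mono (fun a b (h : G.E a b ∧ ¬(a = i ∧ b = j)) => h.1) _ _ ht)
  · have hijne : i ≠ j := by
      rintro rfl; exact G.acyclic i (TransGen.single hij)
    have hpath : ReflTransGen (fun a b => G.E a b ∧ ¬(a = i ∧ b = j)) i j := h2.trans h1
    rcases hpath.cases_head with heq | ⟨x, hix, hxj⟩
    · exact hijne heq
    have hxne : x ≠ j := by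
      rintro rfl; exact hix.2 ⟨rfl, rfl⟩
    have hGix : G.E i x := hix.1
    have hxjE : ReflTransGen G.E x j := ReflTransGen.mono (fun a b (h : G.E a b ∧ ¬(a = i ∧ b = j)) => h.1) _ _ hxj
    have hlt_ix : lvl G.E i < lvl G.E x := lvl_lt hGix
    have hlt_xj : lvl G.E x < lvl G.E j := by
      rcases hxjE.cases_head with rfl | ⟨c, hxc, hcj⟩
      · exact absurd rfl hxne
      · exact lvl_lt_trans (TransGen.head' hxc hcj)
    by_cases hHxi : H.E x i
    · have := hmin i x hGix hHxi
      omega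
    · have hHix : H.E i x := (hadj i x hGix).resolve_right hHxi
      rcases path_split (F := H.E) hxjE with hF | ⟨u, v, h1', h2', h3', h4'⟩
      · exact H.acyclic j (TransGen.head' hji (ReflTransGen.head hHix hF))
      · have hHvu : H.E v u := (hadj u v h1').resolve_left h2'
        have := hmin u v h1' hHvu
        have l1 : lvl G.E x ≤ lvl G.E u := lvl_le_rtg h3'
        have l2 : lvl G.E u < lvl G.E v := lvl_lt h1'
        have l3 : lvl G.E v ≤ lvl G.E j := lvl_le_rtg h4'
        omega

end Stmt19

namespace Stmt19

noncomputable def disag (G H : DAGraph p) : Finset (Fin p × Fin p) :=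
  Finset.univ.filter (fun q => G.E q.1 q.2 ∧ H.E q.2 q.1)

lemma mem_disag {G H : DAGraph p} {q : Fin p × Fin p} :
    q ∈ disag G H ↔ G.E q.1 q.2 ∧ H.E q.2 q.1 := by
  simp [disag]

lemma eq_of_disag_empty {G H : DAGraph p} (hsk : G.skeleton = H.skeleton)
    (h : disag G H = ∅) : G = H := by
  have hadj : ∀ u v : Fin p, G.E u v ↔ H.E u v := by
    intro u v
    constructor
    · intro hG
      have hA : H.skeleton.Adj u v := hsk ▸ (Or.inl hG : G.skeleton.Adj u v)
      rcases hA with hH | hH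
      · exact hH
      · exact absurd (mem_disag.2 ⟨hG, hH⟩ : (u, v) ∈ disag G H) (by simp [h])
    · intro hH
      have hA : G.skeleton.Adj u v := hsk ▸ (Or.inl hH : H.skeleton.Adj u v)
      rcases hA with hG | hG
      · exact hG
      · exact absurd (mem_disag.2 ⟨hG, hH⟩ : (v, u) ∈ disag G H) (by simp [h])
  have hE : G.E = H.E := funext fun u => funext fun v => propext (hadj u v)
  cases G; cases H; simp_all

lemma rev_skel {G : DAGraph p} {i j : Fin p} (hij : G.E i j)
    (G' : DAGraph p) (hE : G'.E = reverseRel G.E i j) :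
    G'.skeleton = G.skeleton := by
  ext a b
  show G'.E a b ∨ G'.E b a ↔ G.E a b ∨ G.E b a
  rw [hE]
  unfold reverseRel
  constructor
  · rintro ((⟨h, -⟩ | ⟨rfl, rfl⟩) | (⟨h, -⟩ | ⟨rfl, rfl⟩))
    · exact Or.inl h
    · exact Or.inr hij
    · exact Or.inr h
    · exact Or.inl hij
  · rintro (h | h)
    · by_cases hc : a = i ∧ b = j
      · exact Or.inr (Or.inr ⟨hc.2, hc.1⟩)
      · exact Or.inl (Or.inl ⟨h, hc⟩)
    · by_cases hc : b = i ∧ a = j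
      · exact Or.inl (Or.inr ⟨hc.2, hc.1⟩)
      · exact Or.inr (Or.inl ⟨h, hc⟩)

lemma disag_rev {G H : DAGraph p} {i j : Fin p}
    (hmem : (i, j) ∈ disag G H)
    (G' : DAGraph p) (hE : G'.E = reverseRel G.E i j) :
    disag G' H = (disag G H).erase (i, j) := by
  obtain ⟨hij, hji⟩ := mem_disag.1 hmem
  ext ⟨a, b⟩
  rw [Finset.mem_erase, mem_disag, mem_disag, hE]
  unfold reverseRel
  constructor
  · rintro ⟨(⟨h, hne⟩ | ⟨rfl, rfl⟩), hH⟩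
    · refine ⟨fun he => ?_, h, hH⟩
      apply hne
      constructor <;> [exact congrArg Prod.fst he; exact congrArg Prod.snd he]
    · exact absurd ((Relation.TransGen.single hji).tail hH) (H.acyclic _)
  · rintro ⟨hne, hG, hH⟩
    refine ⟨Or.inl ⟨hG, ?_⟩, hH⟩
    rintro ⟨rfl, rfl⟩
    exact hne rfl

lemma key (H : DAGraph p) : ∀ (n : ℕ) (G : DAGraph p), G.skeleton = H.skeleton →
    (disag G H).card ≤ n →
    ∃ (m : ℕ) (f : ℕ → DAGraph p), f 0 = G ∧ f m = H ∧
      (∀ k ≤ m, (f k).skeleton = G.skeleton) ∧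
      ∀ k < m, (f k).cim = (f (k + 1)).cim ∨
        ∃ i j : Fin p, (f k).E i j ∧
          ∀ a b, (f (k + 1)).E a b ↔ reverseRel (f k).E i j a b := by
  intro n
  induction n with
  | zero =>
    intro G hsk hcard
    have hG : G = H := eq_of_disag_empty hsk (Finset.card_eq_zero.1 (Nat.le_zero.1 hcard))
    exact ⟨0, fun _ => G, rfl, hG, fun k _ => rfl, fun k hk => absurd hk (Nat.not_lt_zero k)⟩
  | succ n ih =>
    intro G hsk hcard
    by_cases hemp : disag G H = ∅
    · have hG : G = H := eq_of_disag_empty hsk hemp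
      exact ⟨0, fun _ => G, rfl, hG, fun k _ => rfl, fun k hk => absurd hk (Nat.not_lt_zero k)⟩
    · obtain ⟨⟨i, j⟩, hmem, hminq⟩ :=
        Finset.exists_min_image (disag G H) (fun q => lvl G.E q.2 - lvl G.E q.1)
          (Finset.nonempty_of_ne_empty hemp)
      obtain ⟨hij, hji⟩ := mem_disag.1 hmem
      have hmin : ∀ u v, G.E u v → H.E v u →
          lvl G.E j - lvl G.E i ≤ lvl G.E v - lvl G.E u := fun u v h1 h2 =>
        hminq (u, v) (mem_disag.2 ⟨h1, h2⟩)
      set G' : DAGraph p := ⟨reverseRel G.E i j, rev_acyclic G H hsk hij hji hmin⟩ with hG'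
      have hE' : G'.E = reverseRel G.E i j := rfl
      have hskel' : G'.skeleton = G.skeleton := rev_skel hij G' hE'
      have hcard' : (disag G' H).card ≤ n := by
        rw [disag_rev hmem G' hE']
        have := Finset.card_erase_of_mem hmem
        omega
      obtain ⟨m, f, h0, hm, hskf, hstep⟩ := ih G' (hskel'.trans hsk) hcard'
      refine ⟨m + 1, fun k => if k = 0 then G else f (k - 1), rfl, by simpa using hm, ?_, ?_⟩
      · intro k hk
        by_cases hk0 : k = 0
        · simp [hk0]
        · simp only [hk0, if_false]
          rw [hskf (k - 1) (by omega)]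
          exact hskel'
      · intro k hk
        by_cases hk0 : k = 0
        · subst hk0
          refine Or.inr ⟨i, j, hij, fun a b => ?_⟩
          show (f 0).E a b ↔ reverseRel G.E i j a b
          rw [h0]
        · rcases hstep (k - 1) (by omega) with h | ⟨i', j', h1, h2⟩
          · left
            simpa only [hk0, if_false, Nat.add_sub_cancel, if_neg (Nat.succ_ne_zero k),
              show k - 1 + 1 = k from by omega] using h
          · right
            refine ⟨i', j', ?_, ?_⟩
            · simpa only [hk0, if_false] using h1
            · simpa only [hk0, if_false, if_neg (Nat.succ_ne_zero k),
                Nat.add_sub_cancel, show k - 1 + 1 = k from by omega] using h2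

end Stmt19


/-- Any two DAGs `G`, `H` with the same skeleton are connected by a
finite sequence of DAGs, all with the same skeleton, in which consecutive DAGs are either
Markov equivalent (equal characteristic imsets) or differ by the reversal of a single edge
(the reversal preserving acyclicity, since each member of the sequence is a DAG). -/
theorem stmt19 {p : ℕ} (G H : DAGraph p) (hsk : G.skeleton = H.skeleton) :
    ∃ (m : ℕ) (f : ℕ → DAGraph p), f 0 = G ∧ f m = H ∧
      (∀ k ≤ m, (f k).skeleton = G.skeleton) ∧
      ∀ k < m, (f k).cim = (f (k + 1)).cim ∨
        ∃ i j : Fin p, (f k).E i j ∧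
          ∀ a b, (f (k + 1)).E a b ↔ reverseRel (f k).E i j a b := by
  exact Stmt19.key H (Stmt19.disag G H).card G hsk le_rfl
end
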